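/- arXiv:1009.3237 — 5 statements merged into one kernel-verified Lean document; each statement's English description precedes it below -/
import Mathlib

section
/- Let f : ℝ → [0,∞) be a probability density and let h(u) = (f(√u) + f(−√u))/(2√u) for u > 0, extended by 0 to u ≤ 0. Then for almost every r > 0, Z_N(f, √r) = 2 h^{*N}(r) / (|𝕊^{N−1}| r^{N/2 − 1}), where h^{*N} denotes the N-fold convolution of h with itself. -/
open MeasureTheory Real Set

noncomputable section

/-- The normalized uniform probability measure on the sphere of radius `r` in `ℝ^N`,
realized as a measure on `EuclideanSpace ℝ (Fin N)` supported on the sphere. -/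
def sphereUnif (N : ℕ) (r : ℝ) : Measure (EuclideanSpace ℝ (Fin N)) :=
  Measure.map (fun x : Metric.sphere (0 : EuclideanSpace ℝ (Fin N)) 1 =>
      r • (x : EuclideanSpace ℝ (Fin N)))
    (((volume : Measure (EuclideanSpace ℝ (Fin N))).toSphere Set.univ)⁻¹ •
      (volume : Measure (EuclideanSpace ℝ (Fin N))).toSphere)

/-- The surface area `|𝕊^{N-1}|` of the unit sphere in `ℝ^N`. -/
def sphereArea (N : ℕ) : ℝ :=
  (((volume : Measure (EuclideanSpace ℝ (Fin N))).toSphere) Set.univ).toReal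

/-- The normalization function `Z_N(f, r)`. -/
def Znorm (N : ℕ) (f : ℝ → ℝ) (r : ℝ) : ℝ :=
  ∫ v, ∏ i, f (v i) ∂(sphereUnif N r)

/-- Convolution of two functions on `ℝ`. -/
def convR (f g : ℝ → ℝ) (x : ℝ) : ℝ := ∫ t, f t * g (x - t)

/-- The `N`-fold convolution `h^{*N}` (meaningful for `N ≥ 1`). -/
def nfoldConv (h : ℝ → ℝ) : ℕ → ℝ → ℝ
  | 0 => h
  | 1 => h
  | n + 2 => convR (nfoldConv h (n + 1)) h


open scoped ENNReal


/-- 1-D change of variables for lower Lebesgue integral. -/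
lemma lintegral_image_1d {s : Set ℝ} {φ φ' : ℝ → ℝ} (hs : MeasurableSet s)
    (hφ : ∀ x ∈ s, HasDerivWithinAt φ (φ' x) s x) (hinj : InjOn φ s) (g : ℝ → ℝ≥0∞) :
    ∫⁻ x in φ '' s, g x = ∫⁻ x in s, ENNReal.ofReal |φ' x| * g (φ x) := by
  simpa only [ContinuousLinearMap.det_toSpanSingleton] using
    lintegral_image_eq_lintegral_abs_det_fderiv_mul volume hs
      (fun x hx => (hφ x hx).hasFDerivWithinAt) hinj g

lemma sqrt_image_Ioi : Real.sqrt '' (Ioi 0) = Ioi (0:ℝ) := by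
  ext y
  constructor
  · rintro ⟨u, hu, rfl⟩; exact Real.sqrt_pos.2 hu
  · intro hy; exact ⟨y^2, mem_Ioi.2 (pow_pos hy 2), by rw [Real.sqrt_sq hy.le]⟩

lemma neg_sqrt_image_Ioi : (fun u => -Real.sqrt u) '' (Ioi 0) = Iio (0:ℝ) := by
  ext y
  constructor
  · rintro ⟨u, hu, rfl⟩; simpa using Real.sqrt_pos.2 hu
  · intro hy
    refine ⟨y^2, mem_Ioi.2 (by apply sq_pos_of_ne_zero; exact hy.ne), ?_⟩
    show -Real.sqrt (y^2) = y
    rw [Real.sqrt_sq_eq_abs, abs_of_neg hy, neg_neg]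

lemma sqrt_injOn : InjOn Real.sqrt (Ioi 0) := fun a ha b hb hab => by
  have := congrArg (fun t => t^2) hab
  simpa [Real.sq_sqrt (le_of_lt ha), Real.sq_sqrt (le_of_lt hb)] using this

lemma neg_sqrt_injOn : InjOn (fun u => -Real.sqrt u) (Ioi 0) := fun a ha b hb hab => by
  exact sqrt_injOn ha hb (neg_injective hab)

lemma hasDeriv_sqrt_Ioi : ∀ x ∈ Ioi (0:ℝ),
    HasDerivWithinAt Real.sqrt (1/(2*Real.sqrt x)) (Ioi 0) x := fun x hx =>
  (Real.hasDerivAt_sqrt (ne_of_gt hx)).hasDerivWithinAt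

lemma hasDeriv_neg_sqrt_Ioi : ∀ x ∈ Ioi (0:ℝ),
    HasDerivWithinAt (fun u => -Real.sqrt u) (-(1/(2*Real.sqrt x))) (Ioi 0) x := fun x hx =>
  ((Real.hasDerivAt_sqrt (ne_of_gt hx)).hasDerivWithinAt).neg

section Main
variable {f : ℝ → ℝ} (hf_meas : Measurable f) (hf_nonneg : ∀ v, 0 ≤ f v)
  {h : ℝ → ℝ}
  (hh : ∀ u : ℝ, h u =
      if 0 < u then (f (Real.sqrt u) + f (-Real.sqrt u)) / (2 * Real.sqrt u) else 0)

include hh hf_nonneg in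
lemma h_nonneg : ∀ u, 0 ≤ h u := by
  intro u
  rw [hh]
  split_ifs with hu
  · have := Real.sqrt_pos.2 hu
    have h1 := hf_nonneg (Real.sqrt u)
    have h2 := hf_nonneg (-Real.sqrt u)
    positivity
  · exact le_refl 0

include hh hf_meas in
lemma h_meas : Measurable h := by
  have : h = fun u => if 0 < u then (f (Real.sqrt u) + f (-Real.sqrt u)) / (2 * Real.sqrt u)
      else 0 := funext hh
  rw [this]
  apply Measurable.ite measurableSet_Ioi
  · exact ((hf_meas.comp Real.continuous_sqrt.measurable).add
      (hf_meas.comp Real.continuous_sqrt.measurable.neg)).div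
      (Real.continuous_sqrt.measurable.const_mul 2)
  · exact measurable_const

include hh hf_meas hf_nonneg in
lemma key1 (g : ℝ → ℝ≥0∞) (hg : Measurable g) :
    ∫⁻ x, ENNReal.ofReal (f x) * g (x^2) = ∫⁻ u, ENNReal.ofReal (h u) * g u := by
  have hsplitR : ∫⁻ u, ENNReal.ofReal (h u) * g u
      = ∫⁻ u in Ioi 0, ENNReal.ofReal (h u) * g u := by
    rw [← lintegral_add_compl (fun u => ENNReal.ofReal (h u) * g u) measurableSet_Ioi]
    have h0 : ∫⁻ u in (Ioi (0:ℝ))ᶜ, ENNReal.ofReal (h u) * g u = 0 := by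
      rw [compl_Ioi]
      rw [setLIntegral_congr_fun measurableSet_Iic
        (fun u hu => ?_), lintegral_zero]
      show ENNReal.ofReal (h u) * g u = 0
      rw [hh, if_neg (not_lt.2 hu), ENNReal.ofReal_zero, zero_mul]
    rw [h0, add_zero]
  have hsplitL : ∫⁻ x, ENNReal.ofReal (f x) * g (x^2)
      = (∫⁻ x in Ioi 0, ENNReal.ofReal (f x) * g (x^2))
        + ∫⁻ x in Iio 0, ENNReal.ofReal (f x) * g (x^2) := by
    rw [← lintegral_add_compl (fun x => ENNReal.ofReal (f x) * g (x^2)) measurableSet_Ioi,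
      compl_Ioi]
    congr 1
    exact setLIntegral_congr Iio_ae_eq_Iic.symm
  have hIoiL : ∫⁻ x in Ioi 0, ENNReal.ofReal (f x) * g (x^2)
      = ∫⁻ u in Ioi 0, ENNReal.ofReal (1/(2*Real.sqrt u))
          * (ENNReal.ofReal (f (Real.sqrt u)) * g u) := by
    conv_lhs => rw [← sqrt_image_Ioi]
    rw [lintegral_image_1d measurableSet_Ioi hasDeriv_sqrt_Ioi sqrt_injOn]
    apply setLIntegral_congr_fun measurableSet_Ioi
    intro u hu
    have hc : (0:ℝ) < 1/(2*Real.sqrt u) := by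
      have := Real.sqrt_pos.2 hu; positivity
    show ENNReal.ofReal |1/(2*Real.sqrt u)| * (ENNReal.ofReal (f (Real.sqrt u))
        * g (Real.sqrt u ^ 2)) = _
    rw [abs_of_pos hc, Real.sq_sqrt hu.le]
  have hIioL : ∫⁻ x in Iio 0, ENNReal.ofReal (f x) * g (x^2)
      = ∫⁻ u in Ioi 0, ENNReal.ofReal (1/(2*Real.sqrt u))
          * (ENNReal.ofReal (f (-Real.sqrt u)) * g u) := by
    conv_lhs => rw [← neg_sqrt_image_Ioi]
    rw [lintegral_image_1d measurableSet_Ioi hasDeriv_neg_sqrt_Ioi neg_sqrt_injOn]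
    apply setLIntegral_congr_fun measurableSet_Ioi
    intro u hu
    have hc : (0:ℝ) < 1/(2*Real.sqrt u) := by
      have := Real.sqrt_pos.2 hu; positivity
    show ENNReal.ofReal |(-(1/(2*Real.sqrt u)))| * (ENNReal.ofReal (f (-Real.sqrt u))
        * g ((-Real.sqrt u) ^ 2)) = _
    rw [abs_neg, abs_of_pos hc, neg_pow, Even.neg_one_pow (by norm_num), one_mul,
      Real.sq_sqrt hu.le]
  rw [hsplitL, hsplitR, hIoiL, hIioL, ← lintegral_add_left]
  · apply setLIntegral_congr_fun measurableSet_Ioi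
    intro u hu
    have hc : (0:ℝ) < 1/(2*Real.sqrt u) := by
      have := Real.sqrt_pos.2 hu; positivity
    show ENNReal.ofReal (1/(2*Real.sqrt u)) * (ENNReal.ofReal (f (Real.sqrt u)) * g u)
      + ENNReal.ofReal (1/(2*Real.sqrt u)) * (ENNReal.ofReal (f (-Real.sqrt u)) * g u)
      = ENNReal.ofReal (h u) * g u
    have h1 : h u = (1/(2*Real.sqrt u)) * f (Real.sqrt u)
        + (1/(2*Real.sqrt u)) * f (-Real.sqrt u) := by
      rw [hh, if_pos (show (0:ℝ) < u from hu)]; ring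
    rw [h1, ENNReal.ofReal_add (by have := hf_nonneg (Real.sqrt u); positivity)
      (by have := hf_nonneg (-Real.sqrt u); positivity),
      ENNReal.ofReal_mul hc.le, ENNReal.ofReal_mul hc.le]
    ring
  · exact (ENNReal.measurable_ofReal.comp
      ((measurable_const.div (Real.continuous_sqrt.measurable.const_mul 2)))).mul
      ((ENNReal.measurable_ofReal.comp
        (hf_meas.comp Real.continuous_sqrt.measurable)).mul hg)

end Main

/-- ENNReal convolution power. -/
def He (h : ℝ → ℝ) : ℝ → ℝ≥0∞ := fun u => ENNReal.ofReal (h u)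

def HnE (h : ℝ → ℝ) : ℕ → ℝ → ℝ≥0∞
  | 0 => He h
  | 1 => He h
  | n+2 => fun x => ∫⁻ t, HnE h (n+1) t * He h (x - t)

lemma HnE_succ (h : ℝ → ℝ) (n : ℕ) (hn : 1 ≤ n) :
    HnE h (n+1) = fun x => ∫⁻ t, HnE h n t * He h (x - t) := by
  cases n with
  | zero => omega
  | succ m => rfl

lemma nfoldConv_succ (h : ℝ → ℝ) (n : ℕ) (hn : 1 ≤ n) :
    nfoldConv h (n+1) = convR (nfoldConv h n) h := by
  cases n with
  | zero => omega
  | succ m => rfl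

lemma measurable_He {h : ℝ → ℝ} (hm : Measurable h) : Measurable (He h) :=
  ENNReal.measurable_ofReal.comp hm

lemma measurable_conv {F G : ℝ → ℝ≥0∞} (hF : Measurable F) (hG : Measurable G) :
    Measurable (fun x => ∫⁻ t, F t * G (x - t)) := by
  apply Measurable.lintegral_prod_right (f := fun x t => F t * G (x - t))
  exact (hF.comp measurable_snd).mul (hG.comp (measurable_fst.sub measurable_snd))

lemma measurable_HnE {h : ℝ → ℝ} (hm : Measurable h) : ∀ n, Measurable (HnE h n)
  | 0 => measurable_He hm
  | 1 => measurable_He hm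
  | (n+2) => measurable_conv (measurable_HnE hm (n+1)) (measurable_He hm)

lemma He_nonpos {h : ℝ → ℝ} {f : ℝ → ℝ}
    (hh : ∀ u : ℝ, h u =
      if 0 < u then (f (Real.sqrt u) + f (-Real.sqrt u)) / (2 * Real.sqrt u) else 0)
    {x : ℝ} (hx : x ≤ 0) : He h x = 0 := by
  simp [He, hh, not_lt.2 hx]

lemma HnE_nonpos {h : ℝ → ℝ} {f : ℝ → ℝ}
    (hh : ∀ u : ℝ, h u =
      if 0 < u then (f (Real.sqrt u) + f (-Real.sqrt u)) / (2 * Real.sqrt u) else 0) :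
    ∀ n, ∀ x ≤ 0, HnE h n x = 0
  | 0, x, hx => He_nonpos hh hx
  | 1, x, hx => He_nonpos hh hx
  | (n+2), x, hx => by
    show ∫⁻ t, HnE h (n+1) t * He h (x - t) = 0
    rw [← lintegral_zero]
    apply lintegral_congr
    intro t
    rcases le_or_gt t 0 with ht | ht
    · rw [HnE_nonpos hh (n+1) t ht, zero_mul]
    · rw [He_nonpos hh (by linarith), mul_zero]

lemma lintegral_HnE {h : ℝ → ℝ} (hm : Measurable h)
    (hmass : ∫⁻ x, He h x = 1) : ∀ n, ∫⁻ x, HnE h n x = 1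
  | 0 => hmass
  | 1 => hmass
  | (n+2) => by
    show ∫⁻ x, ∫⁻ t, HnE h (n+1) t * He h (x - t) = 1
    rw [lintegral_lintegral_swap]
    · have : ∀ t : ℝ, ∫⁻ x, HnE h (n+1) t * He h (x - t) = HnE h (n+1) t := by
        intro t
        have hms : Measurable (fun x : ℝ => He h (x - t)) :=
          (measurable_He hm).comp (measurable_id.sub measurable_const)
        rw [lintegral_const_mul _ hms]
        have : ∫⁻ x, He h (x - t) = ∫⁻ x, He h x := by
          simpa [sub_eq_add_neg] using lintegral_add_right_eq_self (He h) (-t)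
        rw [this, hmass, mul_one]
      rw [lintegral_congr this, lintegral_HnE hm hmass (n+1)]
    · apply Measurable.aemeasurable
      exact ((measurable_HnE hm (n+1)).comp measurable_snd).mul
        ((measurable_He hm).comp (measurable_fst.sub measurable_snd))

lemma nfoldConv_ae {f : ℝ → ℝ} (hf_meas : Measurable f) (hf_nonneg : ∀ v, 0 ≤ f v)
    {h : ℝ → ℝ}
    (hh : ∀ u : ℝ, h u =
      if 0 < u then (f (Real.sqrt u) + f (-Real.sqrt u)) / (2 * Real.sqrt u) else 0)
    (hmass : ∫⁻ x, He h x = 1) :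
    ∀ n, 1 ≤ n → nfoldConv h n =ᵐ[volume] fun x => (HnE h n x).toReal := by
  have hm : Measurable h := h_meas hf_meas hh
  have hn0 : ∀ u, 0 ≤ h u := h_nonneg hf_nonneg hh
  intro n hn
  induction n, hn using Nat.le_induction with
  | base =>
    apply Filter.Eventually.of_forall
    intro x
    show h x = (ENNReal.ofReal (h x)).toReal
    rw [ENNReal.toReal_ofReal (hn0 x)]
  | succ n hn IH =>
    have hfin : ∀ᵐ x ∂(volume : Measure ℝ), HnE h (n+1) x < ⊤ :=
      ae_lt_top (measurable_HnE hm (n+1)) (by rw [lintegral_HnE hm hmass (n+1)]; exact ENNReal.one_ne_top)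
    filter_upwards [hfin] with x hx
    rw [nfoldConv_succ h n hn]
    show (∫ t, nfoldConv h n t * h (x - t)) = (HnE h (n+1) x).toReal
    have e1 : (∫ t, nfoldConv h n t * h (x - t))
        = ∫ t, (HnE h n t * He h (x - t)).toReal := by
      apply integral_congr_ae
      filter_upwards [IH] with t ht
      rw [ht, ENNReal.toReal_mul, He, ENNReal.toReal_ofReal (hn0 _)]
    have hms : Measurable (fun t : ℝ => HnE h n t * He h (x - t)) :=
      (measurable_HnE hm n).mul
        ((measurable_He hm).comp (measurable_const.sub measurable_id))
    rw [e1, integral_toReal hms.aemeasurable]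
    · rw [HnE_succ h n hn]
    · rw [HnE_succ h n hn] at hx
      exact ae_lt_top hms hx.ne


lemma keyN {f : ℝ → ℝ} (hf_meas : Measurable f) (hf_nonneg : ∀ v, 0 ≤ f v)
    {h : ℝ → ℝ}
    (hh : ∀ u : ℝ, h u =
      if 0 < u then (f (Real.sqrt u) + f (-Real.sqrt u)) / (2 * Real.sqrt u) else 0) :
    ∀ n, 1 ≤ n → ∀ g : ℝ → ℝ≥0∞, Measurable g →
    ∫⁻ w : Fin n → ℝ, (∏ i, ENNReal.ofReal (f (w i))) * g (∑ i, (w i)^2)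
      = ∫⁻ r, HnE h n r * g r := by
  have hm : Measurable h := h_meas hf_meas hh
  intro n hn
  induction n, hn using Nat.le_induction with
  | base =>
    intro g hg
    have h1 : ∫⁻ w : Fin 1 → ℝ, (∏ i, ENNReal.ofReal (f (w i))) * g (∑ i, (w i)^2)
        = ∫⁻ x : ℝ, ENNReal.ofReal (f x) * g (x^2) := by
      have := (volume_preserving_funUnique (Fin 1) ℝ).lintegral_comp
        (f := fun x : ℝ => ENNReal.ofReal (f x) * g (x^2))
        ((ENNReal.measurable_ofReal.comp hf_meas).mul (hg.comp (measurable_id.pow_const 2)))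
      rw [← this]
      apply lintegral_congr
      intro w
      simp [MeasurableEquiv.funUnique, Fin.sum_univ_one, Fin.prod_univ_one]
    rw [h1]
    exact key1 hf_meas hf_nonneg hh g hg
  | succ n hn IH =>
    intro g hg
    have hFe : Measurable fun x : ℝ => ENNReal.ofReal (f x) :=
      ENNReal.measurable_ofReal.comp hf_meas
    have hprod : ∀ m : ℕ, Measurable fun y : Fin m → ℝ => ∏ j, ENNReal.ofReal (f (y j)) := by
      intro m
      apply Finset.measurable_prod
      intro j _
      exact hFe.comp (measurable_pi_apply j)
    have hsum : ∀ m : ℕ, Measurable fun y : Fin m → ℝ => ∑ j, (y j)^2 := by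
      intro m
      apply Finset.measurable_sum
      intro j _
      exact (measurable_pi_apply j).pow_const 2
    -- step 1 : split off coordinate 0
    set e := MeasurableEquiv.piFinSuccAbove (fun _ : Fin (n+1) => ℝ) 0 with he
    have hΦ : Measurable fun w : Fin (n+1) → ℝ =>
        (∏ i, ENNReal.ofReal (f (w i))) * g (∑ i, (w i)^2) :=
      (hprod (n+1)).mul (hg.comp (hsum (n+1)))
    have h1 : ∫⁻ w : Fin (n+1) → ℝ, (∏ i, ENNReal.ofReal (f (w i))) * g (∑ i, (w i)^2)
        = ∫⁻ p : ℝ × (Fin n → ℝ),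
            ENNReal.ofReal (f p.1) *
              ((∏ j, ENNReal.ofReal (f (p.2 j))) * g (p.1^2 + ∑ j, (p.2 j)^2)) := by
      rw [← (MeasurePreserving.symm e (volume_preserving_piFinSuccAbove (fun _ : Fin (n+1) => ℝ) 0)).lintegral_comp hΦ]
      apply lintegral_congr
      rintro ⟨x, y⟩
      show (∏ i, ENNReal.ofReal (f (e.symm (x, y) i))) * g (∑ i, (e.symm (x, y) i)^2) = _
      have h0 : e.symm (x, y) 0 = x := by
        simp [he, MeasurableEquiv.piFinSuccAbove]
      have hsucc : ∀ j : Fin n, e.symm (x, y) (Fin.succAbove 0 j) = y j := by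
        intro j
        simp [he, MeasurableEquiv.piFinSuccAbove]
      rw [Fin.prod_univ_succAbove (fun i => ENNReal.ofReal (f (e.symm (x, y) i))) 0,
        Fin.sum_univ_succAbove (fun i => (e.symm (x, y) i)^2) 0]
      simp only [h0, hsucc, mul_assoc]
    rw [h1]
    -- step 2 : Tonelli
    have hΨ : Measurable fun p : ℝ × (Fin n → ℝ) =>
        ENNReal.ofReal (f p.1) *
          ((∏ j, ENNReal.ofReal (f (p.2 j))) * g (p.1^2 + ∑ j, (p.2 j)^2)) := by
      apply (hFe.comp measurable_fst).mul
      apply ((hprod n).comp measurable_snd).mul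
      exact hg.comp (((measurable_fst.pow_const 2)).add ((hsum n).comp measurable_snd))
    rw [Measure.volume_eq_prod, lintegral_prod _ hΨ.aemeasurable]
    -- step 3 : inner integral via IH
    have h2 : ∀ x : ℝ, ∫⁻ y : Fin n → ℝ,
        ENNReal.ofReal (f x) * ((∏ j, ENNReal.ofReal (f (y j))) * g (x^2 + ∑ j, (y j)^2))
        = ENNReal.ofReal (f x) * ∫⁻ r, HnE h n r * g (x^2 + r) := by
      intro x
      have hmeasxy : Measurable fun y : Fin n → ℝ =>
          (∏ j, ENNReal.ofReal (f (y j))) * g (x^2 + ∑ j, (y j)^2) :=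
        (hprod n).mul (hg.comp ((measurable_const.add (hsum n))))
      rw [lintegral_const_mul _ hmeasxy]
      congr 1
      exact IH (fun r => g (x^2 + r)) (hg.comp (measurable_const.add measurable_id))
    simp only [h2]
    -- step 4 : key1 with G0
    have hG0 : Measurable fun u : ℝ => ∫⁻ r, HnE h n r * g (u + r) := by
      apply Measurable.lintegral_prod_right (f := fun u r => HnE h n r * g (u + r))
      exact ((measurable_HnE hm n).comp measurable_snd).mul
        (hg.comp (measurable_fst.add measurable_snd))
    rw [key1 hf_meas hf_nonneg hh _ hG0]
    -- step 5 : identify with HnE (n+1)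
    rw [HnE_succ h n hn]
    have h3 : ∫⁻ z, (∫⁻ t, HnE h n t * He h (z - t)) * g z
        = ∫⁻ t, HnE h n t * ∫⁻ z, He h (z - t) * g z := by
      have hmz : ∀ z : ℝ, (∫⁻ t, HnE h n t * He h (z - t)) * g z
          = ∫⁻ t, HnE h n t * He h (z - t) * g z := by
        intro z
        have hmz2 : Measurable fun t : ℝ => HnE h n t * He h (z - t) :=
          (measurable_HnE hm n).mul
            ((measurable_He hm).comp (measurable_const.sub measurable_id))
        exact (lintegral_mul_const _ hmz2).symm
      rw [lintegral_congr hmz, lintegral_lintegral_swap]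
      · apply lintegral_congr
        intro t
        have hmz3 : Measurable fun z : ℝ => He h (z - t) * g z :=
          ((measurable_He hm).comp (measurable_id.sub measurable_const)).mul hg
        rw [← lintegral_const_mul _ hmz3]
        apply lintegral_congr
        intro z
        ring
      · apply Measurable.aemeasurable
        apply Measurable.mul
        · exact ((measurable_HnE hm n).comp measurable_snd).mul
            ((measurable_He hm).comp (measurable_fst.sub measurable_snd))
        · exact hg.comp measurable_fst
    rw [h3]
    show (∫⁻ u, He h u * ∫⁻ r, HnE h n r * g (u + r)) = _
    have h4 : ∫⁻ u, He h u * ∫⁻ r, HnE h n r * g (u + r)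
        = ∫⁻ t, HnE h n t * ∫⁻ u, He h u * g (u + t) := by
      have hmz : ∀ u : ℝ, He h u * ∫⁻ r, HnE h n r * g (u + r)
          = ∫⁻ r, He h u * (HnE h n r * g (u + r)) := by
        intro u
        have hmz4 : Measurable fun r : ℝ => HnE h n r * g (u + r) :=
          (measurable_HnE hm n).mul (hg.comp (measurable_const.add measurable_id))
        exact (lintegral_const_mul _ hmz4).symm
      rw [lintegral_congr hmz, lintegral_lintegral_swap]
      · apply lintegral_congr
        intro t
        have hmz5 : Measurable fun u : ℝ => He h u * g (u + t) :=
          (measurable_He hm).mul (hg.comp (measurable_id.add measurable_const))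
        rw [← lintegral_const_mul _ hmz5]
        apply lintegral_congr
        intro u
        ring
      · apply Measurable.aemeasurable
        apply Measurable.mul
        · exact (measurable_He hm).comp measurable_fst
        · exact ((measurable_HnE hm n).comp measurable_snd).mul
            (hg.comp (measurable_fst.add measurable_snd))
    rw [h4]
    apply lintegral_congr
    intro t
    congr 1
    have := lintegral_add_right_eq_self (μ := volume) (fun z => He h (z - t) * g z) t
    rw [← this]
    apply lintegral_congr
    intro u
    simp [add_sub_cancel_right]

/-- The unnormalized spherical integral. -/
def ZS (N : ℕ) (f : ℝ → ℝ) (y : ℝ) : ℝ≥0∞ :=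
  ∫⁻ ω : Metric.sphere (0 : EuclideanSpace ℝ (Fin N)) 1,
    ∏ i, ENNReal.ofReal (f ((y • (ω : EuclideanSpace ℝ (Fin N))) i))
      ∂((volume : Measure (EuclideanSpace ℝ (Fin N))).toSphere)

lemma measurable_coord (N : ℕ) (i : Fin N) :
    Measurable fun v : EuclideanSpace ℝ (Fin N) => v i :=
  (measurable_pi_apply i).comp (MeasurableEquiv.toLp 2 (Fin N → ℝ)).symm.measurable

lemma measurable_prodf {N : ℕ} {f : ℝ → ℝ} (hf_meas : Measurable f) :
    Measurable fun v : EuclideanSpace ℝ (Fin N) => ∏ i, ENNReal.ofReal (f (v i)) := by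
  apply Finset.measurable_prod
  intro i _
  exact (ENNReal.measurable_ofReal.comp hf_meas).comp (measurable_coord N i)

lemma measurable_smul_sphere (N : ℕ) :
    Measurable fun p : ℝ × Metric.sphere (0 : EuclideanSpace ℝ (Fin N)) 1 =>
      p.1 • (p.2 : EuclideanSpace ℝ (Fin N)) := by
  have : Continuous fun p : ℝ × Metric.sphere (0 : EuclideanSpace ℝ (Fin N)) 1 =>
      p.1 • (p.2 : EuclideanSpace ℝ (Fin N)) :=
    continuous_fst.smul (continuous_subtype_val.comp continuous_snd)
  exact this.measurable

lemma measurable_ZS {N : ℕ} {f : ℝ → ℝ} (hf_meas : Measurable f) :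
    Measurable (ZS N f) := by
  apply Measurable.lintegral_prod_right
    (f := fun y (ω : Metric.sphere (0 : EuclideanSpace ℝ (Fin N)) 1) =>
      ∏ i, ENNReal.ofReal (f ((y • (ω : EuclideanSpace ℝ (Fin N))) i)))
  exact (measurable_prodf hf_meas).comp (measurable_smul_sphere N)

lemma keyP {N : ℕ} (hN : 1 ≤ N) {f : ℝ → ℝ} (hf_meas : Measurable f)
    (g : ℝ → ℝ≥0∞) (hg : Measurable g) :
    ∫⁻ v : EuclideanSpace ℝ (Fin N), (∏ i, ENNReal.ofReal (f (v i))) * g (‖v‖^2)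
      = ∫⁻ r in Ioi (0:ℝ),
          (ENNReal.ofReal (1/(2*Real.sqrt r)) * (ENNReal.ofReal (Real.sqrt r ^ (N-1))
            * ZS N f (Real.sqrt r))) * g r := by
  haveI : Nonempty (Fin N) := ⟨⟨0, hN⟩⟩
  set E := EuclideanSpace ℝ (Fin N) with hE
  have hΦ : Measurable fun v : E => (∏ i, ENNReal.ofReal (f (v i))) * g (‖v‖^2) :=
    (measurable_prodf hf_meas).mul
      (hg.comp ((continuous_norm.measurable).pow_const 2))
  have hdim : Module.finrank ℝ E = N := finrank_euclideanSpace_fin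
  -- pass to the subtype of nonzero vectors
  have s1 : ∫⁻ v : E, (∏ i, ENNReal.ofReal (f (v i))) * g (‖v‖^2)
      = ∫⁻ x : ({(0:E)}ᶜ : Set E), (∏ i, ENNReal.ofReal (f ((x:E) i))) * g (‖(x:E)‖^2)
          ∂((volume : Measure E).comap Subtype.val) := by
    have h := lintegral_subtype_comap (μ := (volume : Measure E))
      (measurableSet_singleton (0:E)).compl
      (fun v : E => (∏ i, ENNReal.ofReal (f (v i))) * g (‖v‖^2))
    rw [MeasureTheory.restrict_compl_singleton] at h
    exact h.symm
  rw [s1]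
  -- polar coordinates
  set G := fun p : Metric.sphere (0:E) 1 × Ioi (0:ℝ) =>
    (∏ i, ENNReal.ofReal (f (((p.2 : ℝ) • (p.1 : E)) i))) * g ((p.2 : ℝ)^2) with hG
  have hGm : Measurable G := by
    apply Measurable.mul
    · exact (measurable_prodf hf_meas).comp
        ((measurable_smul_sphere N).comp
          ((measurable_subtype_coe.comp measurable_snd).prodMk measurable_fst))
    · exact hg.comp (((measurable_subtype_coe.comp measurable_snd)).pow_const 2)
  have s2 : ∫⁻ x : ({(0:E)}ᶜ : Set E), (∏ i, ENNReal.ofReal (f ((x:E) i))) * g (‖(x:E)‖^2)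
        ∂((volume : Measure E).comap Subtype.val)
      = ∫⁻ p, G p ∂(((volume : Measure E).toSphere).prod
          (Measure.volumeIoiPow (N - 1))) := by
    have mp := Measure.measurePreserving_homeomorphUnitSphereProd (volume : Measure E)
    rw [hdim] at mp
    rw [← mp.lintegral_comp hGm]
    apply lintegral_congr
    intro x
    set p := homeomorphUnitSphereProd E x with hp
    have h1 : ((p.2 : ℝ) • (p.1 : E) : E) = (x : E) := by
      rw [hp, ← homeomorphUnitSphereProd_symm_apply_coe]
      exact congrArg Subtype.val ((homeomorphUnitSphereProd E).symm_apply_apply x)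
    have h2 : ((p.2 : ℝ)) = ‖(x:E)‖ := by rw [hp, homeomorphUnitSphereProd_apply_snd_coe]
    show (∏ i, ENNReal.ofReal (f ((x:E) i))) * g (‖(x:E)‖^2)
      = (∏ i, ENNReal.ofReal (f (((p.2 : ℝ) • (p.1 : E) : E) i))) * g ((p.2 : ℝ)^2)
    rw [h1, h2]
  rw [s2]
  -- Tonelli
  rw [lintegral_prod_symm G hGm.aemeasurable]
  have s3 : ∀ y : Ioi (0:ℝ), ∫⁻ ω : Metric.sphere (0:E) 1, G (ω, y)
        ∂((volume : Measure E).toSphere)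
      = ZS N f (y : ℝ) * g ((y:ℝ)^2) := by
    intro y
    have hmm : Measurable fun ω : Metric.sphere (0:E) 1 =>
        ∏ i, ENNReal.ofReal (f (((y:ℝ) • (ω : E)) i)) :=
      (measurable_prodf hf_meas).comp
        ((measurable_smul_sphere N).comp (measurable_const.prodMk measurable_id))
    show (∫⁻ ω : Metric.sphere (0:E) 1,
        (∏ i, ENNReal.ofReal (f (((y:ℝ) • (ω:E)) i))) * g ((y:ℝ)^2)
          ∂((volume : Measure E).toSphere)) = _
    exact lintegral_mul_const _ hmm
  rw [lintegral_congr s3]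
  -- unfold volumeIoiPow
  rw [Measure.volumeIoiPow]
  have hdens : Measurable fun y : (Ioi (0:ℝ)) => ENNReal.ofReal ((y:ℝ) ^ (N-1)) :=
    (ENNReal.measurable_ofReal.comp (measurable_subtype_coe.pow_const _))
  rw [lintegral_withDensity_eq_lintegral_mul _ hdens _]
  have s4 : ∫⁻ y : Ioi (0:ℝ),
        (fun y : Ioi (0:ℝ) => ENNReal.ofReal ((y:ℝ) ^ (N-1)))
          y * (ZS N f (y:ℝ) * g ((y:ℝ)^2))
        ∂(Measure.comap Subtype.val volume)
      = ∫⁻ y in Ioi (0:ℝ), ENNReal.ofReal (y ^ (N-1)) * (ZS N f y * g (y^2)) := by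
    exact lintegral_subtype_comap measurableSet_Ioi
      (fun y => ENNReal.ofReal (y ^ (N-1)) * (ZS N f y * g (y^2)))
  rw [show (fun y : Ioi (0:ℝ) => ENNReal.ofReal ((y:ℝ) ^ (N-1))) *
      (fun y : Ioi (0:ℝ) => ZS N f (y:ℝ) * g ((y:ℝ)^2))
    = fun y : Ioi (0:ℝ) => ENNReal.ofReal ((y:ℝ) ^ (N-1)) * (ZS N f (y:ℝ) * g ((y:ℝ)^2))
    from rfl, s4]
  -- substitution y = sqrt r
  conv_lhs => rw [← sqrt_image_Ioi]
  rw [lintegral_image_1d measurableSet_Ioi hasDeriv_sqrt_Ioi sqrt_injOn]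
  apply setLIntegral_congr_fun measurableSet_Ioi
  intro r hr
  have hc : (0:ℝ) < 1/(2*Real.sqrt r) := by
    have := Real.sqrt_pos.2 hr; positivity
  show ENNReal.ofReal |1/(2*Real.sqrt r)|
      * (ENNReal.ofReal (Real.sqrt r ^ (N-1)) * (ZS N f (Real.sqrt r) * g (Real.sqrt r ^ 2)))
    = _
  rw [abs_of_pos hc, Real.sq_sqrt hr.le]
  ring
  exact ((measurable_ZS hf_meas).comp measurable_subtype_coe).mul
    (hg.comp ((measurable_subtype_coe).pow_const 2))

lemma keyE {N : ℕ} {f : ℝ → ℝ} (hf_meas : Measurable f)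
    (g : ℝ → ℝ≥0∞) (hg : Measurable g) :
    ∫⁻ v : EuclideanSpace ℝ (Fin N), (∏ i, ENNReal.ofReal (f (v i))) * g (‖v‖^2)
      = ∫⁻ w : Fin N → ℝ, (∏ i, ENNReal.ofReal (f (w i))) * g (∑ i, (w i)^2) := by
  have hΦ : Measurable fun v : EuclideanSpace ℝ (Fin N) =>
      (∏ i, ENNReal.ofReal (f (v i))) * g (‖v‖^2) :=
    (measurable_prodf hf_meas).mul
      (hg.comp ((continuous_norm.measurable).pow_const 2))
  have mp := MeasurePreserving.symm _ (EuclideanSpace.volume_preserving_symm_measurableEquiv_toLp (Fin N))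
  rw [← mp.lintegral_comp hΦ]
  apply lintegral_congr
  intro w
  set v := (MeasurableEquiv.toLp 2 (Fin N → ℝ)).symm.symm w with hv
  have hcoord : ∀ i, v i = w i := fun i => rfl
  have hnorm : ‖v‖^2 = ∑ i, (w i)^2 := by
    rw [EuclideanSpace.norm_eq, Real.sq_sqrt (by positivity)]
    congr 1
    ext i
    rw [hcoord i, Real.norm_eq_abs, sq_abs]
  show (∏ i, ENNReal.ofReal (f (v i))) * g (‖v‖^2) = _
  rw [hnorm]
  congr 1

/-- `Z_N(f, √r) = 2 h^{*N}(r) / (|𝕊^{N-1}| r^{N/2-1})` for a.e. `r > 0`. -/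
theorem Znorm_eq_nfoldConv
    (f : ℝ → ℝ) (hf_meas : Measurable f) (hf_nonneg : ∀ v, 0 ≤ f v)
    (hf_prob : ∫ v, f v = 1)
    (N : ℕ) (hN : 1 ≤ N)
    (h : ℝ → ℝ)
    (hh : ∀ u : ℝ, h u =
      if 0 < u then (f (Real.sqrt u) + f (-Real.sqrt u)) / (2 * Real.sqrt u) else 0) :
    ∀ᵐ r ∂(volume.restrict (Ioi (0 : ℝ))),
      Znorm N f (Real.sqrt r)
        = 2 * nfoldConv h N r / (sphereArea N * r ^ ((N : ℝ) / 2 - 1)) := by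
  haveI : Nonempty (Fin N) := ⟨⟨0, hN⟩⟩
  have hm : Measurable h := h_meas hf_meas hh
  have hf_int : Integrable f volume := by
    by_contra hc
    rw [integral_undef hc] at hf_prob
    norm_num at hf_prob
  have hmass : ∫⁻ x, He h x = 1 := by
    have h0 : ∫⁻ x, ENNReal.ofReal (f x) = 1 := by
      rw [← ofReal_integral_eq_lintegral_ofReal hf_int
        (Filter.Eventually.of_forall hf_nonneg), hf_prob, ENNReal.ofReal_one]
    have h1 := key1 hf_meas hf_nonneg hh (fun _ => 1) measurable_const
    simp only [mul_one] at h1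
    rw [show (fun x : ℝ => He h x) = fun u => ENNReal.ofReal (h u) from rfl, ← h1, h0]
  -- the density on the polar side
  set DD : ℝ → ℝ≥0∞ := fun r => ENNReal.ofReal (1/(2*Real.sqrt r))
    * (ENNReal.ofReal (Real.sqrt r ^ (N-1)) * ZS N f (Real.sqrt r)) with hDD
  have hsq : Measurable Real.sqrt := Real.continuous_sqrt.measurable
  have hDDm : Measurable DD := by
    apply Measurable.mul
    · exact ENNReal.measurable_ofReal.comp (measurable_const.div (hsq.const_mul 2))
    · exact (ENNReal.measurable_ofReal.comp (hsq.pow_const _)).mul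
        ((measurable_ZS hf_meas).comp hsq)
  -- density identity
  have hae : DD =ᵐ[volume.restrict (Ioi (0:ℝ))] HnE h N := by
    apply ae_eq_of_forall_setLIntegral_eq_of_sigmaFinite hDDm (measurable_HnE hm N)
    intro s hs _
    have hind : Measurable (s.indicator (fun _ => (1:ℝ≥0∞))) :=
      measurable_const.indicator hs
    have hcollapse : ∀ F : ℝ → ℝ≥0∞,
        (fun r => F r * s.indicator (fun _ => (1:ℝ≥0∞)) r) = s.indicator F := by
      intro F
      funext r
      by_cases hr : r ∈ s <;> simp [Set.indicator_apply, hr]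
    have e1 := keyP hN hf_meas _ hind
    have e2 := keyE hf_meas _ hind (N := N)
    have e3 := keyN hf_meas hf_nonneg hh N hN _ hind
    -- combine: ∫⁻ r in Ioi 0, DD r * ind r = ∫⁻ r, HnE h N r * ind r
    have e4 : ∫⁻ r in Ioi (0:ℝ), DD r * s.indicator (fun _ => (1:ℝ≥0∞)) r
        = ∫⁻ r, HnE h N r * s.indicator (fun _ => (1:ℝ≥0∞)) r := by
      rw [← e1, e2, e3]
    -- restrict the RHS to Ioi 0
    have e5 : ∫⁻ r, HnE h N r * s.indicator (fun _ => (1:ℝ≥0∞)) r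
        = ∫⁻ r in Ioi (0:ℝ), HnE h N r * s.indicator (fun _ => (1:ℝ≥0∞)) r := by
      rw [← lintegral_add_compl
        (fun r => HnE h N r * s.indicator (fun _ => (1:ℝ≥0∞)) r) measurableSet_Ioi]
      have hz : ∫⁻ r in (Ioi (0:ℝ))ᶜ, HnE h N r * s.indicator (fun _ => (1:ℝ≥0∞)) r = 0 := by
        rw [compl_Ioi]
        rw [setLIntegral_congr_fun measurableSet_Iic
          (fun r hr => ?_), lintegral_zero]
        show HnE h N r * s.indicator (fun _ => (1:ℝ≥0∞)) r = 0
        rw [HnE_nonpos hh N r hr, zero_mul]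
      rw [hz, add_zero]
    rw [hcollapse DD] at e4
    rw [e5, hcollapse (HnE h N)] at e4
    calc ∫⁻ r in s, DD r ∂(volume.restrict (Ioi 0))
        = ∫⁻ r, s.indicator DD r ∂(volume.restrict (Ioi 0)) := (lintegral_indicator hs DD).symm
      _ = ∫⁻ r, s.indicator (HnE h N) r ∂(volume.restrict (Ioi 0)) := e4
      _ = ∫⁻ r in s, HnE h N r ∂(volume.restrict (Ioi 0)) := lintegral_indicator hs (HnE h N)
  -- a.e. finiteness and identification with nfoldConv
  have hfin : ∀ᵐ r ∂(volume.restrict (Ioi (0:ℝ))), HnE h N r < ⊤ :=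
    ae_restrict_of_ae (ae_lt_top (measurable_HnE hm N)
      (by rw [lintegral_HnE hm hmass N]; exact ENNReal.one_ne_top))
  have hnf : ∀ᵐ r ∂(volume.restrict (Ioi (0:ℝ))), nfoldConv h N r = (HnE h N r).toReal :=
    ae_restrict_of_ae (nfoldConv_ae hf_meas hf_nonneg hh hmass N hN)
  -- sphere area facts
  set S := (volume : Measure (EuclideanSpace ℝ (Fin N))).toSphere Set.univ with hSdef
  have hdim : Module.finrank ℝ (EuclideanSpace ℝ (Fin N)) = N := finrank_euclideanSpace_fin
  have hS : S = (N : ℝ≥0∞) * volume (Metric.ball (0 : EuclideanSpace ℝ (Fin N)) 1) := by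
    rw [hSdef, Measure.toSphere_apply_univ, hdim]
  have hS0 : S ≠ 0 := by
    rw [hS]
    apply mul_ne_zero
    · exact_mod_cast (Nat.pos_of_ne_zero (by omega)).ne'
    · exact (Metric.measure_ball_pos volume (0 : EuclideanSpace ℝ (Fin N)) one_pos).ne'
  have hStop : S ≠ ⊤ := measure_ne_top _ _
  have hSr : 0 < S.toReal := ENNReal.toReal_pos hS0 hStop
  -- conclusion
  filter_upwards [hae, hfin, hnf, ae_restrict_mem measurableSet_Ioi] with r hDDr hfinr hnfr hr
  have hs : (0:ℝ) < Real.sqrt r := Real.sqrt_pos.2 hr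
  -- compute Znorm via lintegral
  have hZint : Znorm N f (Real.sqrt r)
      = (S⁻¹ * ZS N f (Real.sqrt r)).toReal := by
    have hprod_meas : Measurable fun v : EuclideanSpace ℝ (Fin N) => ∏ i, f (v i) := by
      apply Finset.measurable_prod
      intro i _
      exact hf_meas.comp (measurable_coord N i)
    rw [show Znorm N f (Real.sqrt r)
        = ∫ v, ∏ i, f (v i) ∂(sphereUnif N (Real.sqrt r)) from rfl]
    rw [integral_eq_lintegral_of_nonneg_ae
      (Filter.Eventually.of_forall fun v => Finset.prod_nonneg fun i _ => hf_nonneg _)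
      hprod_meas.aestronglyMeasurable]
    congr 1
    have hof : ∀ v : EuclideanSpace ℝ (Fin N),
        ENNReal.ofReal (∏ i, f (v i)) = ∏ i, ENNReal.ofReal (f (v i)) := fun v =>
      ENNReal.ofReal_prod_of_nonneg fun i _ => hf_nonneg _
    rw [lintegral_congr hof]
    rw [show sphereUnif N (Real.sqrt r)
      = Measure.map (fun x : Metric.sphere (0 : EuclideanSpace ℝ (Fin N)) 1 =>
          Real.sqrt r • (x : EuclideanSpace ℝ (Fin N)))
        (S⁻¹ • (volume : Measure (EuclideanSpace ℝ (Fin N))).toSphere) from rfl]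
    have hmap : Measurable fun x : Metric.sphere (0 : EuclideanSpace ℝ (Fin N)) 1 =>
        Real.sqrt r • (x : EuclideanSpace ℝ (Fin N)) :=
      (measurable_smul_sphere N).comp (measurable_const.prodMk measurable_id)
    rw [lintegral_map (measurable_prodf hf_meas) hmap, lintegral_smul_measure]
    rfl
  rw [hZint]
  -- turn everything into real arithmetic
  have htoReal : (1/(2*Real.sqrt r)) * (Real.sqrt r ^ (N-1) * (ZS N f (Real.sqrt r)).toReal)
      = nfoldConv h N r := by
    have := congrArg ENNReal.toReal hDDr
    rw [hDD] at this
    simp only [ENNReal.toReal_mul, ENNReal.toReal_ofReal (by positivity : (0:ℝ) ≤ 1/(2*Real.sqrt r)),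
      ENNReal.toReal_ofReal (by positivity : (0:ℝ) ≤ Real.sqrt r ^ (N-1))] at this
    rw [this, hnfr]
  rw [ENNReal.toReal_mul, ENNReal.toReal_inv]
  rw [← htoReal]
  -- the power identity
  have hpow : Real.sqrt r ^ (N-1) / Real.sqrt r = r ^ ((N:ℝ)/2 - 1) := by
    have h1 : Real.sqrt r ^ (N-1) = r ^ (((N-1:ℕ):ℝ)/2) := by
      rw [Real.sqrt_eq_rpow, ← Real.rpow_natCast (r ^ ((1:ℝ)/2)) (N-1),
        ← Real.rpow_mul hr.le]
      congr 1
      ring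
    have h2 : Real.sqrt r = r ^ ((1:ℝ)/2) := Real.sqrt_eq_rpow r
    rw [h1, h2, ← Real.rpow_sub hr]
    congr 1
    rw [Nat.cast_sub hN]
    ring
  have hrpow_pos : (0:ℝ) < r ^ ((N:ℝ)/2 - 1) := Real.rpow_pos_of_pos hr _
  rw [show sphereArea N = S.toReal from rfl]
  rw [← hpow]
  field_simp

end
end

section
/- Let 0 < δ < 1 and define h_δ(u) = f_δ(√u)/√u for u > 0. Then for all ξ ∈ ℝ, the Fourier transform of h_δ satisfies ĥ_δ(ξ) = ∫_0^∞ h_δ(u) e^{−2πiξu} du = δ/√(1 + 2πiξ/δ) + (1−δ)/√(1 + 2πiξ/(1−δ)), where √ denotes the principal branch of the complex square root. -/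
open MeasureTheory Real Set

noncomputable section

/-- The centered Gaussian density `M_a(v) = e^{-v²/(2a)}/√(2πa)` with variance `a`. -/
def gaussM (a v : ℝ) : ℝ := Real.exp (-v ^ 2 / (2 * a)) / Real.sqrt (2 * π * a)

/-- `f_δ = δ M_{1/(2δ)} + (1-δ) M_{1/(2(1-δ))}`. -/
def fdel (δ v : ℝ) : ℝ :=
  δ * gaussM (1 / (2 * δ)) v + (1 - δ) * gaussM (1 / (2 * (1 - δ))) v

/-- `h_δ(u) = f_δ(√u)/√u` (for `u > 0`). -/
def hdel (δ u : ℝ) : ℝ := fdel δ (Real.sqrt u) / Real.sqrt u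

lemma aux_ofReal_mul_cpow (r : ℝ) (hr : 0 < r) (z : ℂ) (hz : z ≠ 0) (s : ℂ) :
    ((r:ℂ) * z) ^ s = (r:ℂ) ^ s * z ^ s := by
  rw [Complex.cpow_def_of_ne_zero (mul_ne_zero (Complex.ofReal_ne_zero.2 hr.ne') hz),
      Complex.cpow_def_of_ne_zero (Complex.ofReal_ne_zero.2 hr.ne'),
      Complex.cpow_def_of_ne_zero hz, Complex.log_ofReal_mul hr hz, add_mul, Complex.exp_add,
      Complex.ofReal_log hr.le]

lemma aux_gauss_pt (c : ℝ) (hc : 0 < c) (ξ x : ℝ) :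
    (gaussM (1 / (2 * c)) x : ℂ) * Complex.exp (-(2:ℂ) * π * Complex.I * ξ * (x:ℂ)^2)
      = ((Real.sqrt (π / c))⁻¹ : ℝ) *
          Complex.exp (-((c:ℂ) + 2 * π * Complex.I * ξ) * (x:ℂ)^2) := by
  have h1 : gaussM (1 / (2 * c)) x = (Real.sqrt (π / c))⁻¹ * Real.exp (-(c * x^2)) := by
    unfold gaussM
    rw [show 2 * π * (1 / (2 * c)) = π / c by field_simp,
        show -x ^ 2 / (2 * (1 / (2 * c))) = -(c * x^2) by field_simp]
    ring
  rw [h1]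
  push_cast
  rw [mul_assoc, ← Complex.exp_add]
  congr 1
  push_cast
  ring

lemma aux_bre (c ξ : ℝ) : ((c:ℂ) + 2 * π * Complex.I * ξ).re = c := by simp

lemma aux_term (c : ℝ) (hc : 0 < c) (ξ : ℝ) :
    (((Real.sqrt (π / c))⁻¹ : ℝ) : ℂ) * ((π:ℂ) / ((c:ℂ) + 2 * π * Complex.I * ξ)) ^ ((1:ℂ)/2)
      = ((1 + 2 * (π:ℂ) * Complex.I * (ξ:ℂ) / (c:ℂ)) ^ ((1:ℂ)/2))⁻¹ := by
  set b : ℂ := (c:ℂ) + 2 * π * Complex.I * ξ with hbdef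
  have hb : b ≠ 0 := by
    intro h
    have := aux_bre c ξ
    rw [← hbdef, h] at this
    simp at this
    exact hc.ne' this.symm
  have hcne : (c:ℂ) ≠ 0 := Complex.ofReal_ne_zero.2 hc.ne'
  have hπ : (π:ℂ) ≠ 0 := Complex.ofReal_ne_zero.2 Real.pi_ne_zero
  have h1 : 1 + 2 * (π:ℂ) * Complex.I * (ξ:ℂ) / (c:ℂ) = b / c := by
    field_simp [hbdef]
    exact hbdef.symm
  rw [h1]
  have harg : (b / (c:ℂ)).arg ≠ π := by
    have hre : (b / (c:ℂ)).re = 1 := by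
      rw [hbdef, add_div, div_self hcne]
      simp [Complex.div_re, Complex.normSq, Complex.ofReal_ne_zero]
    intro h
    rw [Complex.arg_eq_pi_iff] at h
    obtain ⟨h2, -⟩ := h
    rw [hre] at h2; norm_num at h2
  rw [← Complex.inv_cpow _ _ harg]
  have h2 : (b / (c:ℂ))⁻¹ = ((c / π : ℝ) : ℂ) * ((π:ℂ) / b) := by
    push_cast
    field_simp
  rw [h2, aux_ofReal_mul_cpow (c/π) (div_pos hc Real.pi_pos) _ (div_ne_zero hπ hb)]
  congr 1
  rw [show ((1:ℂ)/2) = ((1/2 : ℝ) : ℂ) by norm_num,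
      ← Complex.ofReal_cpow (le_of_lt (div_pos hc Real.pi_pos)),
      ← Real.sqrt_eq_rpow, show c / π = (π / c)⁻¹ by rw [inv_div], Real.sqrt_inv]

/-- The Fourier transform of `h_δ`:
`ĥ_δ(ξ) = δ/√(1 + 2πiξ/δ) + (1-δ)/√(1 + 2πiξ/(1-δ))`, with the principal
branch of the complex square root (given by `z ^ (1/2 : ℂ)`). -/
theorem hdel_fourierTransform (δ : ℝ) (hδ0 : 0 < δ) (hδ1 : δ < 1) (ξ : ℝ) :
    ∫ u in Ioi (0 : ℝ),
        (hdel δ u : ℂ) * Complex.exp (-(2 : ℂ) * (π : ℂ) * Complex.I * (ξ : ℂ) * (u : ℂ))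
      = (δ : ℂ) / ((1 + 2 * (π : ℂ) * Complex.I * (ξ : ℂ) / (δ : ℂ)) ^ ((1 : ℂ) / 2))
        + ((1 : ℂ) - (δ : ℂ)) /
            ((1 + 2 * (π : ℂ) * Complex.I * (ξ : ℂ) / ((1 : ℂ) - (δ : ℂ))) ^ ((1 : ℂ) / 2)) := by
  have hδ1' : 0 < 1 - δ := by linarith
  set b₁ : ℂ := (δ:ℂ) + 2 * π * Complex.I * ξ with hb₁def
  set b₂ : ℂ := ((1 - δ : ℝ):ℂ) + 2 * π * Complex.I * ξ with hb₂def
  have hb₁ : 0 < b₁.re := by rw [hb₁def, aux_bre]; exact hδ0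
  have hb₂ : 0 < b₂.re := by rw [hb₂def, aux_bre]; exact hδ1'
  set C₁ : ℂ := ((δ * (Real.sqrt (π / δ))⁻¹ : ℝ) : ℂ) with hC₁def
  set C₂ : ℂ := (((1 - δ) * (Real.sqrt (π / (1 - δ)))⁻¹ : ℝ) : ℂ) with hC₂def
  have key : ∫ u in Ioi (0 : ℝ),
      (hdel δ u : ℂ) * Complex.exp (-(2 : ℂ) * (π : ℂ) * Complex.I * (ξ : ℂ) * (u : ℂ))
      = ∫ x in Ioi (0:ℝ),
          (2 * C₁ * Complex.exp (-b₁ * (x:ℂ)^2) + 2 * C₂ * Complex.exp (-b₂ * (x:ℂ)^2)) := by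
    rw [← integral_comp_rpow_Ioi
      (fun u => (hdel δ u : ℂ) * Complex.exp (-(2 : ℂ) * (π : ℂ) * Complex.I * (ξ : ℂ) * (u : ℂ)))
      (p := 2) two_ne_zero]
    refine setIntegral_congr_fun measurableSet_Ioi (fun x hx => ?_)
    have hx0 : (0:ℝ) < x := hx
    have hxr : x ^ (2:ℝ) = x ^ 2 := by
      rw [show (2:ℝ) = ((2:ℕ):ℝ) by norm_num, Real.rpow_natCast]
    have hsq : Real.sqrt (x ^ 2) = x := Real.sqrt_sq hx0.le
    simp only [hxr]
    rw [show (2:ℝ) - 1 = 1 by norm_num, Real.rpow_one]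
    unfold hdel
    rw [hsq]
    rw [Complex.real_smul]
    have hexp : ((x^2 : ℝ) : ℂ) = (x:ℂ)^2 := by push_cast; ring
    rw [hexp]
    have hxc : (x:ℂ) ≠ 0 := Complex.ofReal_ne_zero.2 hx0.ne'
    push_cast
    rw [show ((|2| : ℝ) : ℂ) * x * ((fdel δ x : ℂ) / x *
        Complex.exp (-(2:ℂ) * π * Complex.I * ξ * (x:ℂ)^2))
      = 2 * ((fdel δ x : ℂ) * Complex.exp (-(2:ℂ) * π * Complex.I * ξ * (x:ℂ)^2)) by
        rw [abs_of_pos (by norm_num : (0:ℝ) < 2)]; field_simp; push_cast; ring]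
    unfold fdel
    push_cast
    rw [add_mul, mul_assoc (δ:ℂ), mul_assoc ((1:ℂ) - δ), aux_gauss_pt δ hδ0 ξ x,
        aux_gauss_pt (1 - δ) hδ1' ξ x]
    rw [hC₁def, hC₂def, hb₁def, hb₂def]
    push_cast
    ring
  rw [key]
  have i₁ : Integrable (fun x : ℝ => 2 * C₁ * Complex.exp (-b₁ * (x:ℂ)^2))
      (volume.restrict (Ioi 0)) :=
    ((integrable_cexp_neg_mul_sq hb₁).restrict.const_mul _)
  have i₂ : Integrable (fun x : ℝ => 2 * C₂ * Complex.exp (-b₂ * (x:ℂ)^2))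
      (volume.restrict (Ioi 0)) :=
    ((integrable_cexp_neg_mul_sq hb₂).restrict.const_mul _)
  rw [integral_add i₁ i₂, integral_const_mul, integral_const_mul,
      integral_gaussian_complex_Ioi hb₁, integral_gaussian_complex_Ioi hb₂]
  have t₁ := aux_term δ hδ0 ξ
  have t₂ := aux_term (1 - δ) hδ1' ξ
  rw [← hb₁def] at t₁
  rw [← hb₂def] at t₂
  have e₁ : 2 * C₁ * (((π:ℂ) / b₁) ^ ((1:ℂ)/2) / 2)
      = (δ:ℂ) / ((1 + 2 * (π:ℂ) * Complex.I * (ξ:ℂ) / (δ:ℂ)) ^ ((1:ℂ)/2)) := by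
    rw [hC₁def]
    push_cast
    rw [div_eq_mul_inv (δ:ℂ), ← t₁]
    push_cast
    ring
  have e₂ : 2 * C₂ * (((π:ℂ) / b₂) ^ ((1:ℂ)/2) / 2)
      = ((1:ℂ) - δ) / ((1 + 2 * (π:ℂ) * Complex.I * (ξ:ℂ) / ((1:ℂ) - (δ:ℂ))) ^ ((1:ℂ)/2)) := by
    rw [show ((1:ℂ) - (δ:ℂ)) = ((1 - δ : ℝ) : ℂ) by push_cast; ring, hC₂def]
    rw [div_eq_mul_inv (((1 - δ : ℝ):ℂ)), ← t₂]
    push_cast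
    ring
  rw [e₁, e₂]


end
end

section
/- There exists a function ρ₁ : (0, 1/2) → ℝ with ρ₁(δ)/δ → 0 as δ → 0⁺ such that for every δ ∈ (0, 1/2) and every ξ ∈ ℝ with |ξ| > δ/(4π), one has |g_δ(ξ)| ≤ 1 − δ(1 − (4/5)^{1/4}) + ρ₁(δ). -/
open MeasureTheory Real Set Filter

noncomputable section

/-- `g_δ(ξ) = ∫_0^∞ h_δ(u) e^{-2πiξu} du`, the Fourier transform of `h_δ`. -/
def gdel (δ ξ : ℝ) : ℂ :=
  ∫ u in Ioi (0 : ℝ),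
    (hdel δ u : ℂ) * Complex.exp (-(2 : ℂ) * (π : ℂ) * Complex.I * (ξ : ℂ) * (u : ℂ))

lemma aux1 (c ξ x : ℝ) (hc : 0 < c) :
    ((2 * gaussM (1/(2*c)) x : ℝ) : ℂ) * Complex.exp (-(2:ℂ)*π*Complex.I*ξ*((x:ℂ))^2)
      = ((2 / Real.sqrt (π/c) : ℝ) : ℂ) * Complex.exp (-((c:ℂ) + 2*π*ξ*Complex.I) * (x:ℂ)^2) := by
  have h1 : 2 * π * (1/(2*c)) = π / c := by field_simp
  have h2 : -x ^ 2 / (2 * (1/(2*c))) = -(c * x^2) := by field_simp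
  rw [gaussM, h1, h2]
  have h3 : Complex.exp ((-(c * x^2) : ℝ)) * Complex.exp (-(2:ℂ)*π*Complex.I*ξ*(x:ℂ)^2)
      = Complex.exp (-((c:ℂ) + 2*π*ξ*Complex.I) * (x:ℂ)^2) := by
    rw [← Complex.exp_add]; push_cast; ring_nf
  rw [← h3]
  push_cast [Complex.ofReal_exp]
  ring
lemma aux_int (c ξ : ℝ) (hc : 0 < c) :
    ∫ x in Ioi (0:ℝ), ((2 / Real.sqrt (π/c) : ℝ):ℂ) * Complex.exp (-((c:ℂ)+2*π*ξ*Complex.I)*(x:ℂ)^2)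
      = ((2 / Real.sqrt (π/c) : ℝ):ℂ) * (((π:ℂ)/((c:ℂ)+2*π*ξ*Complex.I))^((1:ℂ)/2)/2) := by
  rw [integral_const_mul, integral_gaussian_complex_Ioi (by simp [hc])]
lemma aux_norm (c ξ : ℝ) (hc : 0 < c) :
    ‖((2 / Real.sqrt (π/c) : ℝ):ℂ) * (((π:ℂ)/((c:ℂ)+2*π*ξ*Complex.I))^((1:ℂ)/2)/2)‖
      = Real.sqrt (c / Real.sqrt (c^2 + (2*π*ξ)^2)) := by
  have hs : (0:ℝ) < Real.sqrt (c^2 + (2*π*ξ)^2) := by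
    apply Real.sqrt_pos.2; positivity
  have habs : ‖((c:ℂ)+2*π*ξ*Complex.I)‖ = Real.sqrt (c^2 + (2*π*ξ)^2) := by
    rw [Complex.norm_def, Complex.normSq_apply]
    norm_num
    ring_nf
  have hcpow : ‖(((π:ℂ)/((c:ℂ)+2*π*ξ*Complex.I))^((1:ℂ)/2))‖
      = Real.sqrt (π / Real.sqrt (c^2 + (2*π*ξ)^2)) := by
    rw [show ((1:ℂ)/2) = (((1:ℝ)/2 : ℝ) : ℂ) by norm_num, Complex.norm_cpow_real,
      norm_div, habs, Complex.norm_real, Real.norm_eq_abs, abs_of_pos pi_pos, ← Real.sqrt_eq_rpow]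
  rw [norm_mul, Complex.norm_real, norm_div ((((π:ℂ)/((c:ℂ)+2*π*ξ*Complex.I))^((1:ℂ)/2))) (2:ℂ), hcpow]
  have h2 : ‖(2:ℂ)‖ = 2 := by norm_num
  rw [h2]
  rw [Real.sqrt_div' π hs.le, Real.sqrt_div pi_pos.le c]
  rw [Real.sqrt_div hc.le, Real.norm_eq_abs, abs_of_pos (by positivity)]
  have hπ : (0:ℝ) < Real.sqrt π := Real.sqrt_pos.2 pi_pos
  have hcs : (0:ℝ) < Real.sqrt c := Real.sqrt_pos.2 hc
  have hss : (0:ℝ) < Real.sqrt (Real.sqrt (c ^ 2 + (2 * π * ξ) ^ 2)) := Real.sqrt_pos.2 hs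
  field_simp
lemma gdel_eq (δ ξ : ℝ) (h0 : 0 < δ) (h1 : δ < 1) :
    gdel δ ξ = (δ:ℂ) * (((2 / Real.sqrt (π/δ) : ℝ):ℂ) * (((π:ℂ)/((δ:ℂ)+2*π*ξ*Complex.I))^((1:ℂ)/2)/2))
      + ((1-δ:ℝ):ℂ) * (((2 / Real.sqrt (π/(1-δ)) : ℝ):ℂ) *
          (((π:ℂ)/(((1-δ:ℝ):ℂ)+2*π*ξ*Complex.I))^((1:ℂ)/2)/2)) := by
  have h1δ : 0 < 1 - δ := by linarith
  have sub := integral_comp_rpow_Ioi_of_pos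
    (g := fun u : ℝ => (hdel δ u : ℂ) * Complex.exp (-(2:ℂ)*(π:ℂ)*Complex.I*(ξ:ℂ)*(u:ℂ)))
    (p := 2) (by norm_num)
  have step1 : gdel δ ξ = ∫ x in Ioi (0:ℝ),
      ((2:ℝ) * x ^ ((2:ℝ)-1)) • ((hdel δ (x ^ (2:ℝ)) : ℂ) *
        Complex.exp (-(2:ℂ)*(π:ℂ)*Complex.I*(ξ:ℂ)*((x ^ (2:ℝ) : ℝ):ℂ))) := by
    rw [gdel, ← sub]
  rw [step1]
  have step2 : ∀ x ∈ Ioi (0:ℝ),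
      ((2:ℝ) * x ^ ((2:ℝ)-1)) • ((hdel δ (x ^ (2:ℝ)) : ℂ) *
        Complex.exp (-(2:ℂ)*(π:ℂ)*Complex.I*(ξ:ℂ)*((x ^ (2:ℝ) : ℝ):ℂ)))
      = (δ:ℂ) * (((2 / Real.sqrt (π/δ) : ℝ):ℂ) * Complex.exp (-((δ:ℂ)+2*π*ξ*Complex.I)*(x:ℂ)^2))
        + ((1-δ:ℝ):ℂ) * (((2 / Real.sqrt (π/(1-δ)) : ℝ):ℂ) *
            Complex.exp (-(((1-δ:ℝ):ℂ)+2*π*ξ*Complex.I)*(x:ℂ)^2)) := by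
    intro x hx
    have hx0 : (0:ℝ) < x := hx
    have hx2 : x ^ (2:ℝ) = x ^ 2 := by
      rw [show (2:ℝ) = ((2:ℕ):ℝ) by norm_num, Real.rpow_natCast]
    rw [← aux1 δ ξ x h0, ← aux1 (1-δ) ξ x h1δ]
    rw [hx2, show ((2:ℝ)-1) = 1 by norm_num, Real.rpow_one]
    rw [hdel, Real.sqrt_sq hx0.le, fdel]
    rw [Complex.real_smul]
    push_cast
    have hxne : (x:ℂ) ≠ 0 := by exact_mod_cast hx0.ne'
    field_simp
  rw [setIntegral_congr_fun measurableSet_Ioi step2]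
  have hre1 : (0:ℝ) < ((δ:ℂ)+2*π*ξ*Complex.I).re := by simp [h0]
  have hre2 : (0:ℝ) < (((1-δ:ℝ):ℂ)+2*π*ξ*Complex.I).re := by simp [h1δ]
  have i1 : Integrable (fun x : ℝ =>
      (δ:ℂ) * (((2 / Real.sqrt (π/δ) : ℝ):ℂ) * Complex.exp (-((δ:ℂ)+2*π*ξ*Complex.I)*(x:ℂ)^2))) :=
    ((integrable_cexp_neg_mul_sq hre1).const_mul _).const_mul _
  have i2 : Integrable (fun x : ℝ =>
      ((1-δ:ℝ):ℂ) * (((2 / Real.sqrt (π/(1-δ)) : ℝ):ℂ) *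
        Complex.exp (-(((1-δ:ℝ):ℂ)+2*π*ξ*Complex.I)*(x:ℂ)^2))) :=
    ((integrable_cexp_neg_mul_sq hre2).const_mul _).const_mul _
  rw [integral_add i1.integrableOn i2.integrableOn, integral_const_mul, integral_const_mul,
    integral_const_mul, integral_const_mul, integral_gaussian_complex_Ioi hre1,
    integral_gaussian_complex_Ioi hre2]


/-- Decay bound on `g_δ` outside the radius `δ/(4π)`. -/
theorem gdel_decay_outside :
    ∃ ρ₁ : ℝ → ℝ,
      Tendsto (fun δ => ρ₁ δ / δ) (nhdsWithin 0 (Ioi 0)) (nhds 0) ∧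
      ∀ δ ∈ Ioo (0 : ℝ) (1 / 2), ∀ ξ : ℝ, δ / (4 * π) < |ξ| →
        ‖gdel δ ξ‖ ≤ 1 - δ * (1 - (4 / 5 : ℝ) ^ ((1 : ℝ) / 4)) + ρ₁ δ := by
  refine ⟨fun _ => 0, ?_, ?_⟩
  · simp only [zero_div]
    exact tendsto_const_nhds
  · rintro δ ⟨h0, h2⟩ ξ hξ
    have h1δ : 0 < 1 - δ := by linarith
    show ‖gdel δ ξ‖ ≤ 1 - δ * (1 - (4 / 5 : ℝ) ^ ((1 : ℝ) / 4)) + 0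
    rw [gdel_eq δ ξ h0 (by linarith)]
    have hb := norm_add_le
      ((δ:ℂ) * (((2 / Real.sqrt (π/δ) : ℝ):ℂ) * (((π:ℂ)/((δ:ℂ)+2*π*ξ*Complex.I))^((1:ℂ)/2)/2)))
      (((1-δ:ℝ):ℂ) * (((2 / Real.sqrt (π/(1-δ)) : ℝ):ℂ) *
          (((π:ℂ)/(((1-δ:ℝ):ℂ)+2*π*ξ*Complex.I))^((1:ℂ)/2)/2)))
    rw [norm_mul, aux_norm δ ξ h0, norm_mul, aux_norm (1-δ) ξ h1δ,
      Complex.norm_real, Complex.norm_real,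
      Real.norm_eq_abs, Real.norm_eq_abs, abs_of_pos h0, abs_of_pos h1δ] at hb
    set s1 := Real.sqrt (δ^2 + (2*π*ξ)^2) with hs1def
    set s2 := Real.sqrt ((1-δ)^2 + (2*π*ξ)^2) with hs2def
    have hs1 : 0 < s1 := Real.sqrt_pos.2 (by positivity)
    have hs2 : 0 < s2 := Real.sqrt_pos.2 (by positivity)
    have hs1sq : s1^2 = δ^2 + (2*π*ξ)^2 := Real.sq_sqrt (by positivity)
    have hs2sq : s2^2 = (1-δ)^2 + (2*π*ξ)^2 := Real.sq_sqrt (by positivity)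
    -- second term ≤ 1
    have t2 : Real.sqrt ((1-δ)/s2) ≤ 1 := by
      rw [Real.sqrt_le_one, div_le_one hs2]
      nlinarith [hs2sq, sq_nonneg (2*π*ξ), hs2]
    -- first term ≤ (4/5)^(1/4)
    have h' : (δ/(4*π))^2 < ξ^2 := by
      rw [← sq_abs ξ]
      exact pow_lt_pow_left₀ hξ (by positivity) two_ne_zero
    have hq : δ^2/4 ≤ (2*π*ξ)^2 := by
      have h4 := mul_lt_mul_of_pos_left h' (show (0:ℝ) < 4*π^2 by positivity)
      have he : 4*π^2 * (δ/(4*π))^2 = δ^2/4 := by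
        field_simp
      nlinarith [h4, he]
    have h45 : (Real.sqrt (4/5))^2 = (4/5 : ℝ) := Real.sq_sqrt (by norm_num)
    have hδs1 : δ ≤ Real.sqrt (4/5) * s1 := by
      by_contra hcon
      push_neg at hcon
      have hp : (Real.sqrt (4/5) * s1)^2 < δ^2 :=
        pow_lt_pow_left₀ hcon (by positivity) two_ne_zero
      rw [mul_pow, h45] at hp
      nlinarith [hp, hs1sq, hq]
    have t1 : Real.sqrt (δ/s1) ≤ (4/5 : ℝ) ^ ((1:ℝ)/4) := by
      have e4 : ((4:ℝ)/5) ^ ((1:ℝ)/4) = Real.sqrt (Real.sqrt (4/5)) := by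
        rw [Real.sqrt_eq_rpow, Real.sqrt_eq_rpow, ← Real.rpow_mul (by norm_num : (0:ℝ) ≤ 4/5)]
        norm_num
      rw [e4]
      apply Real.sqrt_le_sqrt
      rw [div_le_iff₀ hs1]
      linarith [hδs1]
    have hmono1 : δ * Real.sqrt (δ/s1) ≤ δ * ((4/5 : ℝ) ^ ((1:ℝ)/4)) :=
      mul_le_mul_of_nonneg_left t1 h0.le
    have hmono2 : (1-δ) * Real.sqrt ((1-δ)/s2) ≤ (1-δ) * 1 :=
      mul_le_mul_of_nonneg_left t2 h1δ.le
    calc ‖_‖ ≤ δ * Real.sqrt (δ/s1) + (1-δ) * Real.sqrt ((1-δ)/s2) := hb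
      _ ≤ 1 - δ * (1 - (4 / 5 : ℝ) ^ ((1 : ℝ) / 4)) + 0 := by nlinarith [hmono1, hmono2]

end
end

section
/- There exists a function ρ₁ : (0, 1/2) → ℝ with ρ₁(δ)/δ → 0 as δ → 0⁺ such that for every δ ∈ (0, 1/2), every integer j ≥ 0 and every integer N with N − j − 3 > 0, ∫_{|ξ| > δ/(4π)} |g_δ(ξ)|^{N−j−1} dξ ≤ (1 − δ(1 − (4/5)^{1/4}) + ρ₁(δ))^{N−j−1}/π + 2/(π(N − j − 3)). -/
open MeasureTheory Real Set Filter

noncomputable section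

/-! ### Auxiliary lemmas -/

lemma gaussM_sq' {c : ℝ} (hc : 0 < c) (v : ℝ) :
    gaussM (1 / (2 * c)) v = Real.exp (-(c * v ^ 2)) / Real.sqrt (π / c) := by
  unfold gaussM
  rw [show 2 * (1 / (2 * c)) = 1/c by field_simp,
    show 2 * π * (1/(2*c)) = π / c by field_simp]
  congr 1
  field_simp

lemma sq_image' : (fun v : ℝ => v ^ 2) '' Ioi 0 = Ioi 0 := by
  ext u
  constructor
  · rintro ⟨v, hv, rfl⟩; exact pow_pos (show (0:ℝ) < v from hv) 2
  · intro hu; exact ⟨Real.sqrt u, Real.sqrt_pos.mpr hu, Real.sq_sqrt hu.le⟩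

lemma sq_hasDeriv' : ∀ v ∈ Ioi (0:ℝ), HasDerivWithinAt (fun v : ℝ => v ^ 2) (2 * v) (Ioi 0) v := by
  intro v _
  simpa [mul_comm] using (hasDerivAt_pow 2 v).hasDerivWithinAt

lemma sq_injOn' : InjOn (fun v : ℝ => v ^ 2) (Ioi 0) := by
  intro a ha b hb h
  simp only at h
  have h2 : Real.sqrt (a^2) = Real.sqrt (b^2) := by rw [h]
  rwa [Real.sqrt_sq (le_of_lt ha), Real.sqrt_sq (le_of_lt hb)] at h2

lemma piece_pointwise' {c : ℝ} (hc : 0 < c) (ξ : ℝ) {v : ℝ} (hv : v ∈ Ioi (0:ℝ)) :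
    |2 * v| • (((gaussM (1/(2*c)) (Real.sqrt (v^2)) / Real.sqrt (v^2) : ℝ) : ℂ) *
        Complex.exp (-(2:ℂ) * π * Complex.I * ξ * ((v^2 : ℝ) : ℂ)))
      = ((2 / Real.sqrt (π / c) : ℝ) : ℂ) *
          Complex.exp (-((c : ℂ) + 2 * π * Complex.I * ξ) * (v:ℂ) ^ 2) := by
  have hv0 : (0:ℝ) < v := hv
  have hsq : Real.sqrt (v ^ 2) = v := Real.sqrt_sq hv0.le
  rw [gaussM_sq' hc, hsq, abs_of_pos (by linarith : (0:ℝ) < 2 * v)]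
  push_cast
  rw [Complex.real_smul,
    show -((c : ℂ) + 2 * π * Complex.I * ξ) * (v:ℂ) ^ 2
      = -((c:ℂ) * (v:ℂ) ^ 2) + -2 * (π:ℂ) * Complex.I * ξ * (v:ℂ) ^ 2 by ring,
    Complex.exp_add]
  push_cast
  have hvne : (v:ℂ) ≠ 0 := by exact_mod_cast hv0.ne'
  field_simp

lemma piece_integrableOn' {c : ℝ} (hc : 0 < c) (ξ : ℝ) :
    IntegrableOn (fun u : ℝ => ((gaussM (1/(2*c)) (Real.sqrt u) / Real.sqrt u : ℝ) : ℂ) *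
        Complex.exp (-(2:ℂ) * π * Complex.I * ξ * (u : ℂ))) (Ioi 0) := by
  rw [← sq_image', integrableOn_image_iff_integrableOn_abs_deriv_smul measurableSet_Ioi
    sq_hasDeriv' sq_injOn']
  have h1 : IntegrableOn (fun v : ℝ => ((2 / Real.sqrt (π / c) : ℝ) : ℂ) *
      Complex.exp (-((c : ℂ) + 2 * π * Complex.I * ξ) * (v:ℂ) ^ 2)) (Ioi 0) := by
    apply Integrable.integrableOn
    apply Integrable.const_mul
    apply integrable_cexp_neg_mul_sq
    simp [hc]
  exact h1.congr_fun (fun v hv => (piece_pointwise' hc ξ hv).symm) measurableSet_Ioi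

lemma piece_eq' {c : ℝ} (hc : 0 < c) (ξ : ℝ) :
    ∫ u in Ioi (0:ℝ), ((gaussM (1/(2*c)) (Real.sqrt u) / Real.sqrt u : ℝ) : ℂ) *
        Complex.exp (-(2:ℂ) * π * Complex.I * ξ * (u : ℂ))
      = ((Real.sqrt (c/π) : ℝ) : ℂ) * ((π:ℂ) / ((c:ℂ) + 2 * π * Complex.I * ξ)) ^ (1/2 : ℂ) := by
  conv_lhs => rw [← sq_image',
    integral_image_eq_integral_abs_deriv_smul measurableSet_Ioi sq_hasDeriv' sq_injOn']
  rw [setIntegral_congr_fun measurableSet_Ioi (fun v hv => piece_pointwise' hc ξ hv),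
    MeasureTheory.integral_const_mul, integral_gaussian_complex_Ioi (by simp [hc])]
  have h2 : Real.sqrt (π / c) ≠ 0 := (Real.sqrt_pos.mpr (div_pos pi_pos hc)).ne'
  have h3 : Real.sqrt (c/π) = (Real.sqrt (π/c))⁻¹ := by
    rw [← Real.sqrt_inv, inv_div]
  rw [h3]
  push_cast [h2]
  field_simp

/-- the explicit formula for `gdel` -/
def gform (δ ξ : ℝ) : ℂ :=
  (δ:ℂ) * (((Real.sqrt (δ/π) : ℝ):ℂ) * ((π:ℂ)/((δ:ℂ) + 2 * π * Complex.I * ξ))^(1/2:ℂ))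
    + ((1-δ:ℝ):ℂ) * (((Real.sqrt ((1-δ)/π) : ℝ):ℂ) *
        ((π:ℂ)/(((1-δ:ℝ):ℂ) + 2 * π * Complex.I * ξ))^(1/2:ℂ))

lemma gdel_eq' {δ : ℝ} (h0 : 0 < δ) (h1 : δ < 1) (ξ : ℝ) : gdel δ ξ = gform δ ξ := by
  have hδ' : (0:ℝ) < 1 - δ := by linarith
  unfold gdel gform
  have hsplit : ∀ u : ℝ, ((hdel δ u : ℝ) : ℂ) * Complex.exp (-(2:ℂ)*π*Complex.I*ξ*u)
      = (δ:ℂ) * (((gaussM (1/(2*δ)) (Real.sqrt u) / Real.sqrt u : ℝ):ℂ) *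
          Complex.exp (-(2:ℂ)*π*Complex.I*ξ*u))
        + ((1-δ:ℝ):ℂ) * (((gaussM (1/(2*(1-δ))) (Real.sqrt u) / Real.sqrt u : ℝ):ℂ) *
          Complex.exp (-(2:ℂ)*π*Complex.I*ξ*u)) := by
    intro u
    unfold hdel fdel
    push_cast
    ring
  simp_rw [hsplit]
  rw [integral_add ((piece_integrableOn' h0 ξ).const_mul _)
      ((piece_integrableOn' hδ' ξ).const_mul _),
    MeasureTheory.integral_const_mul, MeasureTheory.integral_const_mul,
    piece_eq' h0 ξ, piece_eq' hδ' ξ]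

lemma norm_term' {c : ℝ} (hc : 0 < c) (ξ : ℝ) :
    ‖((Real.sqrt (c/π) : ℝ) : ℂ) * ((π:ℂ) / ((c:ℂ) + 2 * π * Complex.I * ξ)) ^ (1/2 : ℂ)‖
      = Real.sqrt (c / Real.sqrt (c^2 + (2*π*ξ)^2)) := by
  have habs : ‖(c:ℂ) + 2 * π * Complex.I * ξ‖ = Real.sqrt (c^2 + (2*π*ξ)^2) := by
    rw [Complex.norm_def, Complex.normSq_apply]
    norm_num
    ring_nf
  have hA : 0 < Real.sqrt (c^2 + (2*π*ξ)^2) := by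
    apply Real.sqrt_pos.mpr; positivity
  rw [norm_mul,
    show (1/2 : ℂ) = ((1/2 : ℝ) : ℂ) by norm_num,
    Complex.norm_cpow_real, norm_div, Complex.norm_real, Complex.norm_real, Real.norm_eq_abs,
    Real.norm_eq_abs, habs,
    abs_of_pos pi_pos, _root_.abs_of_nonneg (Real.sqrt_nonneg _),
    ← Real.sqrt_eq_rpow, ← Real.sqrt_mul (by positivity)]
  congr 1
  field_simp

lemma gdel_norm_le' {δ : ℝ} (h0 : 0 < δ) (h1 : δ < 1) (ξ : ℝ) :
    ‖gdel δ ξ‖ ≤ δ * Real.sqrt (δ / Real.sqrt (δ^2 + (2*π*ξ)^2))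
      + (1-δ) * Real.sqrt ((1-δ) / Real.sqrt ((1-δ)^2 + (2*π*ξ)^2)) := by
  have hδ' : (0:ℝ) < 1 - δ := by linarith
  rw [gdel_eq' h0 h1, gform]
  refine le_trans (norm_add_le _ _) ?_
  rw [norm_mul ((δ:ℝ):ℂ), norm_mul ((1-δ:ℝ):ℂ), norm_term' h0, norm_term' hδ']
  have : ‖1 - (δ:ℂ)‖ = 1 - δ := by
    rw [show (1 : ℂ) - (δ:ℂ) = ((1 - δ : ℝ) : ℂ) by push_cast; ring, Complex.norm_real,
      Real.norm_eq_abs,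
      _root_.abs_of_pos hδ']
  simp [Complex.norm_real, _root_.abs_of_pos h0, _root_.abs_of_pos hδ', this]

lemma denom_ne_zero' {c : ℝ} (hc : 0 < c) (ξ : ℝ) : ((c:ℂ) + 2*π*Complex.I*ξ) ≠ 0 := by
  intro h
  have h2 : ((c:ℂ) + 2*π*Complex.I*ξ).re = 0 := by rw [h]; simp
  simp [Complex.add_re, Complex.mul_re, Complex.mul_im] at h2
  exact hc.ne' h2

lemma gform_continuous' {δ : ℝ} (h0 : 0 < δ) (h1 : δ < 1) : Continuous (gform δ) := by
  have hc : ∀ c : ℝ, 0 < c →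
      Continuous (fun ξ : ℝ => ((π:ℂ)/((c:ℂ) + 2*π*Complex.I*ξ))^(1/2:ℂ)) := by
    intro c hcpos
    rw [continuous_iff_continuousAt]
    intro ξ
    have hbne : ((c:ℂ) + 2*π*Complex.I*ξ) ≠ 0 := denom_ne_zero' hcpos ξ
    have hden : ContinuousAt (fun ξ:ℝ => ((c:ℂ)+2*π*Complex.I*ξ)) ξ := by fun_prop
    have hbase : ContinuousAt (fun ξ:ℝ => (π:ℂ)/((c:ℂ)+2*π*Complex.I*ξ)) ξ :=
      continuousAt_const.div hden hbne
    apply hbase.cpow continuousAt_const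
    left
    rw [Complex.div_re]
    have hpos : 0 < Complex.normSq ((c:ℂ) + 2*π*Complex.I*ξ) := Complex.normSq_pos.mpr hbne
    have hre : ((c:ℂ) + 2*π*Complex.I*ξ).re = c := by
      simp [Complex.add_re, Complex.mul_re, Complex.mul_im]
    have him : ((π:ℂ)).im = 0 := by simp
    rw [hre, him]
    simp only [Complex.ofReal_re, zero_mul, zero_div, add_zero]
    positivity
  unfold gform
  exact ((continuous_const.mul (continuous_const.mul (hc δ h0)))).add
    ((continuous_const.mul (continuous_const.mul (hc _ (by linarith)))))

lemma gdel_bound_B' {δ ξ : ℝ} (h0 : 0 < δ) (h1 : δ < 1) (hξ : δ/(4*π) < |ξ|) :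
    ‖gdel δ ξ‖ ≤ 1 - δ * (1 - (4/5 : ℝ) ^ ((1:ℝ)/4)) := by
  have hδ' : (0:ℝ) < 1 - δ := by linarith
  refine le_trans (gdel_norm_le' h0 h1 ξ) ?_
  have hterm2 : Real.sqrt ((1-δ) / Real.sqrt ((1-δ)^2 + (2*π*ξ)^2)) ≤ 1 := by
    have harg : (1-δ) / Real.sqrt ((1-δ)^2 + (2*π*ξ)^2) ≤ 1 := by
      rw [div_le_one (Real.sqrt_pos.mpr (add_pos_of_pos_of_nonneg (pow_pos hδ' 2) (sq_nonneg _)))]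
      calc 1 - δ = Real.sqrt ((1-δ)^2) := by rw [Real.sqrt_sq hδ'.le]
      _ ≤ _ := Real.sqrt_le_sqrt (by nlinarith [sq_nonneg (2*π*ξ)])
    calc Real.sqrt ((1-δ) / Real.sqrt ((1-δ)^2 + (2*π*ξ)^2)) ≤ Real.sqrt 1 :=
      Real.sqrt_le_sqrt harg
    _ = 1 := Real.sqrt_one
  have hsq : δ^2 / 4 < (2*π*ξ)^2 := by
    have h2 : δ/2 < 2*π*|ξ| := by
      have := (div_lt_iff₀ (by positivity)).mp hξ
      nlinarith [pi_pos]
    calc δ^2/4 = (δ/2)^2 := by ring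
    _ < (2*π*|ξ|)^2 := by nlinarith [pi_pos, abs_nonneg ξ, h2]
    _ = (2*π*ξ)^2 := by
      rw [show (2*π*|ξ|)^2 = (2*π)^2 * |ξ|^2 by ring, _root_.sq_abs]
      ring
  have hterm1 : Real.sqrt (δ / Real.sqrt (δ^2 + (2*π*ξ)^2)) ≤ (4/5 : ℝ) ^ ((1:ℝ)/4) := by
    have hA : Real.sqrt (δ^2 * (5/4)) ≤ Real.sqrt (δ^2 + (2*π*ξ)^2) :=
      Real.sqrt_le_sqrt (by nlinarith)
    have hA' : Real.sqrt (δ^2 * (5/4)) = δ * Real.sqrt (5/4) := by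
      rw [Real.sqrt_mul (by positivity), Real.sqrt_sq h0.le]
    have hfrac : δ / Real.sqrt (δ^2 + (2*π*ξ)^2) ≤ Real.sqrt (4/5) := by
      have h54 : 0 < Real.sqrt (5/4) := Real.sqrt_pos.mpr (by norm_num)
      have hle : δ * Real.sqrt (5/4) ≤ Real.sqrt (δ^2+(2*π*ξ)^2) := by rw [← hA']; exact hA
      have step : δ / Real.sqrt (δ^2 + (2*π*ξ)^2) ≤ δ / (δ * Real.sqrt (5/4)) :=
        div_le_div_of_nonneg_left h0.le (mul_pos h0 h54) hle
      refine step.trans_eq ?_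
      rw [show (4/5:ℝ) = ((5/4:ℝ))⁻¹ by norm_num, Real.sqrt_inv]
      field_simp
    calc Real.sqrt (δ / Real.sqrt (δ^2 + (2*π*ξ)^2)) ≤ Real.sqrt (Real.sqrt (4/5)) :=
      Real.sqrt_le_sqrt hfrac
    _ = (4/5 : ℝ) ^ ((1:ℝ)/4) := by
      rw [Real.sqrt_eq_rpow, Real.sqrt_eq_rpow, ← Real.rpow_mul (by norm_num : (0:ℝ) ≤ 4/5)]
      norm_num
  calc δ * Real.sqrt (δ / Real.sqrt (δ^2 + (2*π*ξ)^2))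
      + (1-δ) * Real.sqrt ((1-δ) / Real.sqrt ((1-δ)^2 + (2*π*ξ)^2))
      ≤ δ * ((4/5 : ℝ) ^ ((1:ℝ)/4)) + (1-δ) * 1 := by
        gcongr
    _ = 1 - δ * (1 - (4/5 : ℝ) ^ ((1:ℝ)/4)) := by ring

lemma gdel_bound_decay' {δ ξ : ℝ} (h0 : 0 < δ) (h1 : δ < 1) (hξ : ξ ≠ 0) :
    ‖gdel δ ξ‖ ≤ Real.sqrt (1/(2*π*|ξ|)) := by
  refine le_trans (gdel_norm_le' h0 h1 ξ) ?_
  have hx : 0 < |ξ| := abs_pos.mpr hξ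
  have key : ∀ c : ℝ, 0 < c → c ≤ 1 →
      Real.sqrt (c / Real.sqrt (c^2+(2*π*ξ)^2)) ≤ Real.sqrt (1/(2*π*|ξ|)) := by
    intro c hc hc1
    apply Real.sqrt_le_sqrt
    have h2 : 2*π*|ξ| ≤ Real.sqrt (c^2 + (2*π*ξ)^2) := by
      calc 2*π*|ξ| = Real.sqrt ((2*π*ξ)^2) := by
            rw [show (2*π*ξ)^2 = (2*π*|ξ|)^2 by
              rw [show (2*π*|ξ|)^2 = (2*π)^2*|ξ|^2 by ring, _root_.sq_abs]; ring,
              Real.sqrt_sq (by positivity)]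
      _ ≤ _ := Real.sqrt_le_sqrt (by nlinarith [sq_nonneg c])
    calc c / Real.sqrt (c^2+(2*π*ξ)^2) ≤ c/(2*π*|ξ|) :=
          div_le_div_of_nonneg_left hc.le (by positivity) h2
    _ ≤ 1/(2*π*|ξ|) := by gcongr
  have hδ' : (0:ℝ) < 1 - δ := by linarith
  calc δ * Real.sqrt (δ / Real.sqrt (δ^2 + (2*π*ξ)^2))
      + (1-δ) * Real.sqrt ((1-δ) / Real.sqrt ((1-δ)^2 + (2*π*ξ)^2))
      ≤ δ * Real.sqrt (1/(2*π*|ξ|)) + (1-δ) * Real.sqrt (1/(2*π*|ξ|)) :=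
        add_le_add (mul_le_mul_of_nonneg_left (key δ h0 h1.le) h0.le)
          (mul_le_mul_of_nonneg_left (key (1-δ) hδ' (by linarith)) hδ'.le)
    _ = Real.sqrt (1/(2*π*|ξ|)) := by ring

lemma psi_eq_on_Ioi {k : ℕ} (hk : 3 ≤ k) :
    ∀ ξ ∈ Ioi (1/(2*π) : ℝ), ((1/(2*π):ℝ) ^ ((k:ℝ)/2)) * ξ ^ (-(k:ℝ)/2)
      = (1/(2*π*|ξ|)) ^ ((k:ℝ)/2) := by
  intro ξ hξ
  have hξ0 : (0:ℝ) < ξ := lt_trans (by positivity) hξ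
  rw [abs_of_pos hξ0, show 1/(2*π*ξ) = (1/(2*π)) * ξ⁻¹ by field_simp,
    Real.mul_rpow (by positivity) (by positivity), Real.inv_rpow hξ0.le,
    ← Real.rpow_neg hξ0.le, neg_div]

lemma psi_integrableOn_Ioi {k : ℕ} (hk : 3 ≤ k) :
    IntegrableOn (fun ξ : ℝ => (1/(2*π*|ξ|)) ^ ((k:ℝ)/2)) (Ioi (1/(2*π))) := by
  have hkr : (3:ℝ) ≤ (k:ℝ) := by exact_mod_cast hk
  have ha : (-(k:ℝ)/2) < -1 := by linarith
  have hc : (0:ℝ) < 1/(2*π) := by positivity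
  have base : IntegrableOn (fun x : ℝ => ((1/(2*π):ℝ) ^ ((k:ℝ)/2)) * x ^ (-(k:ℝ)/2))
      (Ioi (1/(2*π))) := (integrableOn_Ioi_rpow_of_lt ha hc).const_mul _
  exact base.congr_fun (psi_eq_on_Ioi hk) measurableSet_Ioi

lemma psi_integral_Ioi {k : ℕ} (hk : 3 ≤ k) :
    ∫ ξ in Ioi (1/(2*π) : ℝ), (1/(2*π*|ξ|)) ^ ((k:ℝ)/2) = 1/(π*((k:ℝ)-2)) := by
  have hkr : (3:ℝ) ≤ (k:ℝ) := by exact_mod_cast hk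
  have ha : (-(k:ℝ)/2) < -1 := by linarith
  have ht : (0:ℝ) < 2*π := by positivity
  have hc : (0:ℝ) < 1/(2*π) := by positivity
  rw [← setIntegral_congr_fun measurableSet_Ioi (psi_eq_on_Ioi hk),
    MeasureTheory.integral_const_mul, integral_Ioi_rpow_of_lt ha hc]
  have e1 : ((1:ℝ)/(2*π)) ^ ((k:ℝ)/2) = ((2*π) ^ ((k:ℝ)/2))⁻¹ := by
    rw [one_div, Real.inv_rpow ht.le]
  have e2 : ((1:ℝ)/(2*π)) ^ (-(k:ℝ)/2 + 1) = ((2*π) ^ (-(k:ℝ)/2 + 1))⁻¹ := by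
    rw [one_div, Real.inv_rpow ht.le]
  rw [e1, e2]
  have e3 : ((2*π) ^ ((k:ℝ)/2)) * ((2*π) ^ (-(k:ℝ)/2 + 1)) = 2*π := by
    rw [← Real.rpow_add ht, show ((k:ℝ)/2) + (-(k:ℝ)/2 + 1) = 1 by ring, Real.rpow_one]
  have hk2 : (k:ℝ) - 2 ≠ 0 := by intro h; nlinarith
  calc ((2*π) ^ ((k:ℝ)/2))⁻¹ * (-((2*π) ^ (-(k:ℝ)/2 + 1))⁻¹ / (-(k:ℝ)/2 + 1))
      = -((((2*π) ^ ((k:ℝ)/2)) * ((2*π) ^ (-(k:ℝ)/2 + 1)))⁻¹) / (-(k:ℝ)/2 + 1) := by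
        rw [mul_inv]; ring
    _ = -((2*π)⁻¹) / (-(k:ℝ)/2 + 1) := by rw [e3]
    _ = 1/(π*((k:ℝ)-2)) := by
        rw [show -(k:ℝ)/2 + 1 = -(((k:ℝ)-2)/2) by ring, div_neg, neg_div, neg_neg]
        rw [eq_div_iff (by
          intro h
          rcases mul_eq_zero.mp h with h' | h'
          · exact pi_ne_zero h'
          · exact hk2 h'), div_mul_eq_mul_div, div_eq_iff (by
          intro h
          rcases div_eq_zero_iff.mp h with h' | h'
          · exact hk2 h'
          · norm_num at h')]
        field_simp

lemma neg_image_Ici (a : ℝ) : (fun x : ℝ => -x) '' (Ici a) = Iic (-a) := by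
  simpa using Set.image_neg_Ici (a := a)

lemma neg_hasDeriv (a : ℝ) : ∀ x ∈ Ici a, HasDerivWithinAt (fun x : ℝ => -x) (-1) (Ici a) x :=
  fun x _ => (hasDerivAt_neg x).hasDerivWithinAt

lemma neg_injOn (a : ℝ) : InjOn (fun x : ℝ => -x) (Ici a) := fun x _ y _ h => by
  simpa using h

lemma psi_integrableOn_Iic {k : ℕ} (hk : 3 ≤ k) :
    IntegrableOn (fun ξ : ℝ => (1/(2*π*|ξ|)) ^ ((k:ℝ)/2)) (Iic (-(1/(2*π)))) := by
  rw [← neg_image_Ici, integrableOn_image_iff_integrableOn_abs_deriv_smul measurableSet_Ici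
    (neg_hasDeriv _) (neg_injOn _)]
  have : IntegrableOn (fun ξ : ℝ => (1/(2*π*|ξ|)) ^ ((k:ℝ)/2)) (Ici (1/(2*π))) :=
    Iff.mpr integrableOn_Ici_iff_integrableOn_Ioi (psi_integrableOn_Ioi hk)
  refine this.congr_fun (fun x _ => ?_) measurableSet_Ici
  simp [abs_neg]

lemma psi_integral_Iic {k : ℕ} (hk : 3 ≤ k) :
    ∫ ξ in Iic (-(1/(2*π)) : ℝ), (1/(2*π*|ξ|)) ^ ((k:ℝ)/2) = 1/(π*((k:ℝ)-2)) := by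
  rw [← integral_comp_neg_Ioi]
  simp_rw [abs_neg]
  exact psi_integral_Ioi hk

/-- Integral bound for powers of `g_δ` outside the radius `δ/(4π)`. -/
theorem gdel_pow_integral_bound :
    ∃ ρ₁ : ℝ → ℝ,
      Tendsto (fun δ => ρ₁ δ / δ) (nhdsWithin 0 (Ioi 0)) (nhds 0) ∧
      ∀ δ ∈ Ioo (0 : ℝ) (1 / 2), ∀ j N : ℕ, j + 3 < N →
        ∫ ξ in {ξ : ℝ | δ / (4 * π) < |ξ|}, ‖gdel δ ξ‖ ^ (N - j - 1)
          ≤ (1 - δ * (1 - (4 / 5 : ℝ) ^ ((1 : ℝ) / 4)) + ρ₁ δ) ^ (N - j - 1) / π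
            + 2 / (π * ((N : ℝ) - (j : ℝ) - 3)) := by
  refine ⟨fun _ => 0, by simpa [zero_div] using tendsto_const_nhds, ?_⟩
  intro δ hδ j N hjN
  obtain ⟨h0, hhalf⟩ := hδ
  have h1 : δ < 1 := by linarith
  set k := N - j - 1 with hkdef
  have hk3 : 3 ≤ k := by omega
  have hkr : (3:ℝ) ≤ (k:ℝ) := by exact_mod_cast hk3
  have hkN : (N:ℝ) - (j:ℝ) - 3 = (k:ℝ) - 2 := by
    have h : k + (j + 1) = N := by omega
    have : ((k + (j+1) : ℕ) : ℝ) = (N:ℝ) := by exact_mod_cast congrArg Nat.cast h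
    push_cast at this
    linarith
  set B := 1 - δ * (1 - (4/5 : ℝ) ^ ((1:ℝ)/4)) with hBdef
  have h45pos : (0:ℝ) < (4/5 : ℝ) ^ ((1:ℝ)/4) := Real.rpow_pos_of_pos (by norm_num) _
  have h45le : (4/5 : ℝ) ^ ((1:ℝ)/4) ≤ 1 :=
    Real.rpow_le_one (by norm_num) (by norm_num) (by norm_num)
  have hB0 : 0 ≤ B := by
    have hmul : δ * (1 - (4/5:ℝ)^((1:ℝ)/4)) ≤ δ * 1 := mul_le_mul_of_nonneg_left (by linarith) h0.le
    simp only [hBdef]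
    linarith
  set c₁ : ℝ := 1/(2*π) with hc₁def
  have hc₁ : 0 < c₁ := by positivity
  set S : Set ℝ := {ξ : ℝ | δ / (4 * π) < |ξ|} with hSdef
  have hSmeas : MeasurableSet S := (isOpen_lt continuous_const continuous_abs).measurableSet
  set S₁ : Set ℝ := S ∩ Icc (-c₁) c₁ with hS₁def
  set S₂ : Set ℝ := S \ Icc (-c₁) c₁ with hS₂def
  set T : Set ℝ := Iic (-c₁) ∪ Ioi c₁ with hTdef
  set f : ℝ → ℝ := fun ξ => ‖gdel δ ξ‖ ^ k with hfdef
  set ψ : ℝ → ℝ := fun ξ => (1/(2*π*|ξ|)) ^ ((k:ℝ)/2) with hψdef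
  have hcont : Continuous f := by
    have : f = fun ξ => ‖gform δ ξ‖ ^ k := funext fun ξ => by
      simp only [hfdef]
      rw [gdel_eq' h0 h1]
    rw [this]
    exact (gform_continuous' h0 h1).norm.pow k
  have hfnonneg : ∀ ξ, 0 ≤ f ξ := fun ξ => pow_nonneg (norm_nonneg _) k
  have hψnonneg : ∀ ξ, 0 ≤ ψ ξ := fun ξ => Real.rpow_nonneg (by positivity) _
  have hS₂T : S₂ ⊆ T := by
    intro x hx
    rcases hx with ⟨_, hx2⟩
    rcases lt_or_ge x (-c₁) with h | h
    · exact Or.inl h.le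
    · rcases le_or_gt x c₁ with h' | h'
      · exact absurd ⟨h, h'⟩ hx2
      · exact Or.inr h'
  have hTne : ∀ x ∈ T, x ≠ 0 := by
    rintro x (hx | hx) rfl
    · simp only [mem_Iic] at hx; linarith
    · simp only [mem_Ioi] at hx; linarith
  have hfleψ : ∀ x : ℝ, x ≠ 0 → f x ≤ ψ x := by
    intro x hx
    have hb := gdel_bound_decay' h0 h1 hx
    have h2 : f x ≤ (Real.sqrt (1/(2*π*|x|))) ^ k := pow_le_pow_left₀ (norm_nonneg _) hb k
    refine h2.trans_eq ?_
    have hy : (0:ℝ) ≤ 1/(2*π*|x|) := by positivity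
    rw [Real.sqrt_eq_rpow, ← Real.rpow_natCast ((1/(2*π*|x|)) ^ ((1:ℝ)/2)) k,
      ← Real.rpow_mul hy]
    congr 1
    ring
  have hψT : IntegrableOn ψ T := (psi_integrableOn_Iic hk3).union (psi_integrableOn_Ioi hk3)
  have hTmeas : MeasurableSet T := measurableSet_Iic.union measurableSet_Ioi
  have hfT : IntegrableOn f T := by
    refine hψT.mono' (hcont.aestronglyMeasurable.restrict) ?_
    refine (ae_restrict_iff' hTmeas).mpr (Eventually.of_forall fun x hx => ?_)
    rw [Real.norm_eq_abs, abs_of_nonneg (hfnonneg x)]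
    exact hfleψ x (hTne x hx)
  have hfS₂ : IntegrableOn f S₂ := hfT.mono_set hS₂T
  have hfS₁ : IntegrableOn f S₁ :=
    (hcont.integrableOn_Icc (a := -c₁) (b := c₁)).mono_set inter_subset_right
  have hIntS : IntegrableOn f S := by
    have : S = S₁ ∪ S₂ := (inter_union_diff S (Icc (-c₁) c₁)).symm
    rw [this]
    exact hfS₁.union hfS₂
  have hsplit : ∫ ξ in S, f ξ = (∫ ξ in S₁, f ξ) + ∫ ξ in S₂, f ξ :=
    (integral_inter_add_diff measurableSet_Icc hIntS).symm
  -- bound on S₁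
  have hμIcc : volume (Icc (-c₁) c₁) = ENNReal.ofReal (2 * c₁) := by
    rw [Real.volume_Icc]; congr 1; ring
  have hμS₁le : volume S₁ ≤ ENNReal.ofReal (2 * c₁) := by
    rw [← hμIcc]; exact measure_mono inter_subset_right
  have hfin : volume S₁ < ⊤ := lt_of_le_of_lt hμS₁le ENNReal.ofReal_lt_top
  have hbound1 : ∫ ξ in S₁, f ξ ≤ B ^ k * (1/π) := by
    have hnorm := norm_setIntegral_le_of_norm_le_const (C := B ^ k) hfin
      (fun x hx => by
        rw [Real.norm_eq_abs, abs_of_nonneg (hfnonneg x)]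
        exact pow_le_pow_left₀ (norm_nonneg _) (gdel_bound_B' h0 h1 hx.1) k)
    have h2 : ∫ ξ in S₁, f ξ ≤ ‖∫ ξ in S₁, f ξ‖ := le_abs_self _
    refine h2.trans (hnorm.trans ?_)
    have h3 : (volume S₁).toReal ≤ 2 * c₁ := by
      have := ENNReal.toReal_mono ENNReal.ofReal_ne_top hμS₁le
      rwa [ENNReal.toReal_ofReal (by positivity)] at this
    have h4 : 2 * c₁ = 1/π := by rw [hc₁def]; field_simp
    calc B ^ k * (volume S₁).toReal ≤ B ^ k * (2 * c₁) :=
          mul_le_mul_of_nonneg_left h3 (pow_nonneg hB0 k)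
      _ = B ^ k * (1/π) := by rw [h4]
  -- bound on S₂
  have hbound2 : ∫ ξ in S₂, f ξ ≤ 2/(π*((k:ℝ)-2)) := by
    have hS₂meas : MeasurableSet S₂ := hSmeas.diff measurableSet_Icc
    have step1 : ∫ ξ in S₂, f ξ ≤ ∫ ξ in S₂, ψ ξ :=
      setIntegral_mono_on hfS₂ (hψT.mono_set hS₂T) hS₂meas
        (fun x hx => hfleψ x (hTne x (hS₂T hx)))
    have step2 : ∫ ξ in S₂, ψ ξ ≤ ∫ ξ in T, ψ ξ :=
      setIntegral_mono_set hψT (Eventually.of_forall hψnonneg)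
        (HasSubset.Subset.eventuallyLE hS₂T)
    have hdisj : Disjoint (Iic (-c₁)) (Ioi c₁) := by
      rw [Set.disjoint_left]
      intro x hx hx'
      simp only [mem_Iic] at hx
      simp only [mem_Ioi] at hx'
      linarith
    have step3 : ∫ ξ in T, ψ ξ = (∫ ξ in Iic (-c₁), ψ ξ) + ∫ ξ in Ioi c₁, ψ ξ :=
      setIntegral_union hdisj measurableSet_Ioi (psi_integrableOn_Iic hk3)
        (psi_integrableOn_Ioi hk3)
    rw [step3, psi_integral_Iic hk3, psi_integral_Ioi hk3] at step2
    have : 1/(π*((k:ℝ)-2)) + 1/(π*((k:ℝ)-2)) = 2/(π*((k:ℝ)-2)) := by ring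
    linarith
  have : ∫ ξ in S, f ξ ≤ B ^ k * (1/π) + 2/(π*((k:ℝ)-2)) := by
    rw [hsplit]; exact add_le_add hbound1 hbound2
  refine this.trans_eq ?_
  rw [add_zero, hkN]
  ring

end
end

section
/- For all a > 0 and η > 0: (√(2π)/a)·√(1 − e^{−a²η²/2}) ≤ ∫_{|x|<η} e^{−a²x²/2} dx ≤ (√(2π)/a)·√(1 − e^{−a²η²}), and ∫_{|x|>η} e^{−a²x²/2} dx ≤ (√(2π)/a)·e^{−a²η²/2}. -/
open MeasureTheory Real Set

lemma my_exp_eq (a : ℝ) : ∀ x : ℝ, Real.exp (-a ^ 2 * x ^ 2 / 2) = Real.exp (-(a ^ 2 / 2) * x ^ 2) :=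
  fun x => by ring_nf

lemma gauss_total (a : ℝ) (ha : 0 < a) :
    ∫ x : ℝ, Real.exp (-a ^ 2 * x ^ 2 / 2) = Real.sqrt (2 * π) / a := by
  simp_rw [my_exp_eq a]
  rw [integral_gaussian, show π / (a ^ 2 / 2) = 2 * π / a ^ 2 by ring,
    Real.sqrt_div (by positivity) (a ^ 2), Real.sqrt_sq ha.le]

lemma gauss_integrable (a : ℝ) (ha : 0 < a) :
    Integrable (fun x : ℝ => Real.exp (-a ^ 2 * x ^ 2 / 2)) := by
  simp_rw [my_exp_eq a]
  exact integrable_exp_neg_mul_sq (by positivity)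

lemma hasDeriv_F (a : ℝ) (ha : 0 < a) (x : ℝ) :
    HasDerivAt (fun r : ℝ => -Real.exp (-a ^ 2 * r ^ 2 / 2) / a ^ 2)
      (x * Real.exp (-a ^ 2 * x ^ 2 / 2)) x := by
  have h0 : (fun r : ℝ => -a ^ 2 * r ^ 2 / 2) = fun r : ℝ => (-a ^ 2 / 2) * r ^ 2 := by
    funext r; ring
  have h1 : HasDerivAt (fun r : ℝ => -a ^ 2 * r ^ 2 / 2) (-a ^ 2 * x) x := by
    rw [h0]
    have := (hasDerivAt_pow 2 x).const_mul (-a ^ 2 / 2)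
    refine this.congr_deriv ?_
    norm_num
    ring
  have h2 := (h1.exp.neg).div_const (a ^ 2)
  refine h2.congr_deriv ?_
  field_simp

lemma rint_Ioi (a R : ℝ) (ha : 0 < a) :
    ∫ r in Ioi R, r * Real.exp (-a ^ 2 * r ^ 2 / 2) = Real.exp (-a ^ 2 * R ^ 2 / 2) / a ^ 2 := by
  have hint : IntegrableOn (fun r : ℝ => r * Real.exp (-a ^ 2 * r ^ 2 / 2)) (Ioi R) := by
    apply Integrable.integrableOn
    simp_rw [my_exp_eq a]
    exact integrable_mul_exp_neg_mul_sq (by positivity)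
  have htend : Filter.Tendsto (fun r : ℝ => -Real.exp (-a ^ 2 * r ^ 2 / 2) / a ^ 2)
      Filter.atTop (nhds 0) := by
    have h1 : Filter.Tendsto (fun r : ℝ => -a ^ 2 * r ^ 2 / 2) Filter.atTop Filter.atBot := by
      have h2 : Filter.Tendsto (fun r : ℝ => r ^ 2) Filter.atTop Filter.atTop :=
        Filter.tendsto_pow_atTop (by norm_num)
      have h3 := h2.const_mul_atTop_of_neg
        (show -a ^ 2 / 2 < 0 by nlinarith)
      refine h3.congr (fun r => by ring)
    have h4 := (Real.tendsto_exp_atBot.comp h1).neg.div_const (a ^ 2)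
    simpa using h4
  have := integral_Ioi_of_hasDerivAt_of_tendsto' (f' := fun r => r * Real.exp (-a ^ 2 * r ^ 2 / 2))
    (fun x _ => hasDeriv_F a ha x) hint htend
  rw [this]
  ring

lemma rint_Ioo (a R : ℝ) (ha : 0 < a) (hR : 0 ≤ R) :
    ∫ r in Ioo 0 R, r * Real.exp (-a ^ 2 * r ^ 2 / 2)
      = (1 - Real.exp (-a ^ 2 * R ^ 2 / 2)) / a ^ 2 := by
  rw [← integral_Ioc_eq_integral_Ioo, ← intervalIntegral.integral_of_le hR]
  have hcont : Continuous (fun r : ℝ => r * Real.exp (-a ^ 2 * r ^ 2 / 2)) := by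
    continuity
  rw [intervalIntegral.integral_eq_sub_of_hasDerivAt (fun x _ => hasDeriv_F a ha x)
    (hcont.intervalIntegrable 0 R)]
  norm_num
  ring

lemma polar_radial (a : ℝ) (T : Set ℝ) (hT : MeasurableSet T) :
    ∫ p : ℝ × ℝ in {p : ℝ × ℝ | Real.sqrt (p.1 ^ 2 + p.2 ^ 2) ∈ T},
        Real.exp (-a ^ 2 * (p.1 ^ 2 + p.2 ^ 2) / 2)
      = (2 * π) * ∫ r in Ioi 0 ∩ T, r * Real.exp (-a ^ 2 * r ^ 2 / 2) := by
  set G : ℝ × ℝ → ℝ := fun p => Real.exp (-a ^ 2 * (p.1 ^ 2 + p.2 ^ 2) / 2) with hG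
  set S : Set (ℝ × ℝ) := {p : ℝ × ℝ | Real.sqrt (p.1 ^ 2 + p.2 ^ 2) ∈ T} with hSdef
  have hS : MeasurableSet S := by
    have hc : Continuous (fun p : ℝ × ℝ => Real.sqrt (p.1 ^ 2 + p.2 ^ 2)) := by continuity
    exact hc.measurable hT
  rw [← integral_indicator hS, ← integral_comp_polarCoord_symm]
  have key : EqOn (fun p : ℝ × ℝ => p.1 • S.indicator G (polarCoord.symm p))
      (fun p : ℝ × ℝ =>
        ((Ioi (0:ℝ) ∩ T).indicator (fun r => r * Real.exp (-a ^ 2 * r ^ 2 / 2)) p.1)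
          * (fun _ : ℝ => (1:ℝ)) p.2)
      polarCoord.target := by
    intro p hp
    simp only [polarCoord_target, mem_prod, mem_Ioi, mem_Ioo] at hp
    have hp1 : 0 < p.1 := hp.1
    have hsymm : polarCoord.symm p = (p.1 * Real.cos p.2, p.1 * Real.sin p.2) := rfl
    have hr2 : (p.1 * Real.cos p.2) ^ 2 + (p.1 * Real.sin p.2) ^ 2 = p.1 ^ 2 := by
      have := Real.sin_sq_add_cos_sq p.2
      nlinarith [this]
    by_cases hmem : p.1 ∈ T
    · have h1 : ((p.1 * Real.cos p.2, p.1 * Real.sin p.2) : ℝ × ℝ) ∈ S := by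
        simp only [hSdef, mem_setOf_eq]
        rw [hr2, Real.sqrt_sq hp1.le]
        exact hmem
      have h2 : p.1 ∈ Ioi (0:ℝ) ∩ T := ⟨hp1, hmem⟩
      simp only [hsymm, indicator_of_mem h1, indicator_of_mem h2, hG, smul_eq_mul, mul_one]
      rw [hr2]
    · have h1 : ((p.1 * Real.cos p.2, p.1 * Real.sin p.2) : ℝ × ℝ) ∉ S := by
        simp only [hSdef, mem_setOf_eq]
        rw [hr2, Real.sqrt_sq hp1.le]
        exact hmem
      have h2 : p.1 ∉ Ioi (0:ℝ) ∩ T := fun h => hmem h.2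
      simp only [hsymm, indicator_of_notMem h1, indicator_of_notMem h2, smul_zero, mul_zero,
        zero_mul]
  rw [setIntegral_congr_fun (polarCoord.open_target.measurableSet) key]
  rw [polarCoord_target, Measure.volume_eq_prod]
  rw [setIntegral_prod_mul ((Ioi (0:ℝ) ∩ T).indicator (fun r => r * Real.exp (-a ^ 2 * r ^ 2 / 2)))
    (fun _ : ℝ => (1:ℝ)) (Ioi 0) (Ioo (-π) π)]
  have h1 : ∫ x in Ioi (0:ℝ),
      (Ioi (0:ℝ) ∩ T).indicator (fun r => r * Real.exp (-a ^ 2 * r ^ 2 / 2)) x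
      = ∫ r in Ioi 0 ∩ T, r * Real.exp (-a ^ 2 * r ^ 2 / 2) := by
    rw [setIntegral_indicator (measurableSet_Ioi.inter hT), inter_eq_right.mpr inter_subset_left]
  have h2 : ∫ _ in Ioo (-π) π, (1:ℝ) = 2 * π := by
    simp [Real.volume_Ioo]
    rw [max_eq_left (by positivity)]
    ring
  rw [h1, h2]
  ring

lemma disk_lt (a R : ℝ) (ha : 0 < a) (hR : 0 < R) :
    ∫ p : ℝ × ℝ in {p : ℝ × ℝ | p.1 ^ 2 + p.2 ^ 2 < R ^ 2},
        Real.exp (-a ^ 2 * (p.1 ^ 2 + p.2 ^ 2) / 2)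
      = 2 * π / a ^ 2 * (1 - Real.exp (-a ^ 2 * R ^ 2 / 2)) := by
  have hset : {p : ℝ × ℝ | p.1 ^ 2 + p.2 ^ 2 < R ^ 2}
      = {p : ℝ × ℝ | Real.sqrt (p.1 ^ 2 + p.2 ^ 2) ∈ Ico 0 R} := by
    ext p
    simp only [mem_setOf_eq, mem_Ico, Real.sqrt_nonneg, true_and, Real.sqrt_lt' hR]
  have hinter : Ioi (0:ℝ) ∩ Ico 0 R = Ioo 0 R := by
    ext x
    simp only [mem_inter_iff, mem_Ioi, mem_Ico, mem_Ioo]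
    constructor
    · rintro ⟨h1, _, h3⟩; exact ⟨h1, h3⟩
    · rintro ⟨h1, h2⟩; exact ⟨h1, h1.le, h2⟩
  rw [hset, polar_radial a _ measurableSet_Ico, hinter, rint_Ioo a R ha hR.le]
  ring

lemma disk_gt (a R : ℝ) (ha : 0 < a) (hR : 0 ≤ R) :
    ∫ p : ℝ × ℝ in {p : ℝ × ℝ | R ^ 2 < p.1 ^ 2 + p.2 ^ 2},
        Real.exp (-a ^ 2 * (p.1 ^ 2 + p.2 ^ 2) / 2)
      = 2 * π / a ^ 2 * Real.exp (-a ^ 2 * R ^ 2 / 2) := by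
  have hset : {p : ℝ × ℝ | R ^ 2 < p.1 ^ 2 + p.2 ^ 2}
      = {p : ℝ × ℝ | Real.sqrt (p.1 ^ 2 + p.2 ^ 2) ∈ Ioi R} := by
    ext p
    simp only [mem_setOf_eq, mem_Ioi, Real.lt_sqrt hR]
  have hinter : Ioi (0:ℝ) ∩ Ioi R = Ioi R := by
    rw [Ioi_inter_Ioi, max_eq_right hR]
  rw [hset, polar_radial a _ measurableSet_Ioi, hinter, rint_Ioi a R ha]
  ring

/-- Gaussian integral estimates:
`(√(2π)/a)√(1-e^{-a²η²/2}) ≤ ∫_{|x|<η} e^{-a²x²/2} dx ≤ (√(2π)/a)√(1-e^{-a²η²})` and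
`∫_{|x|>η} e^{-a²x²/2} dx ≤ (√(2π)/a) e^{-a²η²/2}`. -/
theorem gaussian_integral_estimates (a η : ℝ) (ha : 0 < a) (hη : 0 < η) :
    (Real.sqrt (2 * π) / a * Real.sqrt (1 - Real.exp (-a ^ 2 * η ^ 2 / 2))
      ≤ ∫ x in {x : ℝ | |x| < η}, Real.exp (-a ^ 2 * x ^ 2 / 2)) ∧
    ((∫ x in {x : ℝ | |x| < η}, Real.exp (-a ^ 2 * x ^ 2 / 2))
      ≤ Real.sqrt (2 * π) / a * Real.sqrt (1 - Real.exp (-a ^ 2 * η ^ 2))) ∧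
    ((∫ x in {x : ℝ | η < |x|}, Real.exp (-a ^ 2 * x ^ 2 / 2))
      ≤ Real.sqrt (2 * π) / a * Real.exp (-a ^ 2 * η ^ 2 / 2)) := by
  set g : ℝ → ℝ := fun x => Real.exp (-a ^ 2 * x ^ 2 / 2) with hg
  set S1 : Set ℝ := {x : ℝ | |x| < η} with hS1def
  set S2 : Set ℝ := {x : ℝ | η < |x|} with hS2def
  have hS1 : MeasurableSet S1 := measurableSet_lt (continuous_abs.measurable) measurable_const
  have hS2 : MeasurableSet S2 := measurableSet_lt measurable_const (continuous_abs.measurable)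
  set I : ℝ := ∫ x in S1, g x with hI
  set J : ℝ := ∫ x in S2, g x with hJ
  set G2 : ℝ × ℝ → ℝ := fun p => Real.exp (-a ^ 2 * (p.1 ^ 2 + p.2 ^ 2) / 2) with hG2
  have hG2eq : (fun z : ℝ × ℝ => g z.1 * g z.2) = G2 := by
    funext p
    simp only [hg, hG2, ← Real.exp_add]
    ring_nf
  have hG2int : Integrable G2 := by
    rw [Measure.volume_eq_prod, ← hG2eq]
    exact (gauss_integrable a ha).mul_prod (gauss_integrable a ha)
  have hG2nonneg : 0 ≤ G2 := fun p => (Real.exp_pos _).le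
  have hI0 : 0 ≤ I := setIntegral_nonneg hS1 (fun x _ => (Real.exp_pos _).le)
  have hJ0 : 0 ≤ J := setIntegral_nonneg hS2 (fun x _ => (Real.exp_pos _).le)
  have hIsq : I ^ 2 = ∫ p in S1 ×ˢ S1, G2 p := by
    rw [sq, hI, ← hG2eq]
    rw [Measure.volume_eq_prod, setIntegral_prod_mul]
  have hJsq : J ^ 2 = ∫ p in S2 ×ˢ S2, G2 p := by
    rw [sq, hJ, ← hG2eq]
    rw [Measure.volume_eq_prod, setIntegral_prod_mul]
  have hsq2 : (Real.sqrt 2 * η) ^ 2 = 2 * η ^ 2 := by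
    rw [mul_pow, Real.sq_sqrt (by norm_num : (0:ℝ) ≤ 2)]
  -- subset relations
  have hsub1 : {p : ℝ × ℝ | p.1 ^ 2 + p.2 ^ 2 < η ^ 2} ⊆ S1 ×ˢ S1 := by
    rintro ⟨x, y⟩ h
    simp only [mem_setOf_eq] at h
    constructor <;>
      · simp only [hS1def, mem_setOf_eq]
        nlinarith [sq_abs x, sq_abs y, abs_nonneg x, abs_nonneg y, sq_nonneg x, sq_nonneg y]
  have hsub2 : S1 ×ˢ S1 ⊆ {p : ℝ × ℝ | p.1 ^ 2 + p.2 ^ 2 < (Real.sqrt 2 * η) ^ 2} := by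
    rintro ⟨x, y⟩ ⟨h1, h2⟩
    simp only [hS1def, mem_setOf_eq] at h1 h2
    simp only [mem_setOf_eq, hsq2]
    nlinarith [sq_abs x, sq_abs y, abs_nonneg x, abs_nonneg y]
  have hsub3 : S2 ×ˢ S2 ⊆ {p : ℝ × ℝ | (Real.sqrt 2 * η) ^ 2 < p.1 ^ 2 + p.2 ^ 2} := by
    rintro ⟨x, y⟩ ⟨h1, h2⟩
    simp only [hS2def, mem_setOf_eq] at h1 h2
    simp only [mem_setOf_eq, hsq2]
    nlinarith [sq_abs x, sq_abs y, abs_nonneg x, abs_nonneg y]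
  -- exponent rewrites
  have hexp2 : -a ^ 2 * (Real.sqrt 2 * η) ^ 2 / 2 = -a ^ 2 * η ^ 2 := by
    rw [hsq2]; ring
  -- bounds on squares
  have hIlb : 2 * π / a ^ 2 * (1 - Real.exp (-a ^ 2 * η ^ 2 / 2)) ≤ I ^ 2 := by
    rw [hIsq, ← disk_lt a η ha hη]
    exact setIntegral_mono_set hG2int.integrableOn
      (Filter.Eventually.of_forall (fun p => hG2nonneg p)) hsub1.eventuallyLE
  have hIub : I ^ 2 ≤ 2 * π / a ^ 2 * (1 - Real.exp (-a ^ 2 * η ^ 2)) := by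
    rw [hIsq, ← hexp2, ← disk_lt a (Real.sqrt 2 * η) ha (by positivity)]
    exact setIntegral_mono_set hG2int.integrableOn
      (Filter.Eventually.of_forall (fun p => hG2nonneg p)) hsub2.eventuallyLE
  have hJub : J ^ 2 ≤ 2 * π / a ^ 2 * Real.exp (-a ^ 2 * η ^ 2) := by
    rw [hJsq, ← hexp2, ← disk_gt a (Real.sqrt 2 * η) ha (by positivity)]
    exact setIntegral_mono_set hG2int.integrableOn
      (Filter.Eventually.of_forall (fun p => hG2nonneg p)) hsub3.eventuallyLE
  -- nonnegativity of the various constants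
  have hc1 : 0 ≤ 1 - Real.exp (-a ^ 2 * η ^ 2 / 2) := by
    have : Real.exp (-a ^ 2 * η ^ 2 / 2) ≤ 1 := by
      rw [← Real.exp_zero]
      exact Real.exp_le_exp.mpr (by nlinarith)
    linarith
  have hc2 : 0 ≤ 1 - Real.exp (-a ^ 2 * η ^ 2) := by
    have : Real.exp (-a ^ 2 * η ^ 2) ≤ 1 := by
      rw [← Real.exp_zero]
      exact Real.exp_le_exp.mpr (by nlinarith)
    linarith
  have hsqrt_fact : ∀ c : ℝ, 0 ≤ c →
      Real.sqrt (2 * π / a ^ 2 * c) = Real.sqrt (2 * π) / a * Real.sqrt c := by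
    intro c hc
    rw [Real.sqrt_mul (by positivity), Real.sqrt_div (by positivity : (0:ℝ) ≤ 2 * π),
      Real.sqrt_sq ha.le]
  refine ⟨?_, ?_, ?_⟩
  · rw [← hsqrt_fact _ hc1, ← Real.sqrt_sq hI0]
    exact Real.sqrt_le_sqrt hIlb
  · rw [← hsqrt_fact _ hc2, ← Real.sqrt_sq hI0]
    exact Real.sqrt_le_sqrt hIub
  · have hexp3 : Real.sqrt (Real.exp (-a ^ 2 * η ^ 2)) = Real.exp (-a ^ 2 * η ^ 2 / 2) := by
      rw [show Real.exp (-a ^ 2 * η ^ 2) = (Real.exp (-a ^ 2 * η ^ 2 / 2)) ^ 2 by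
        rw [show (Real.exp (-a ^ 2 * η ^ 2 / 2)) ^ 2
            = Real.exp (-a ^ 2 * η ^ 2 / 2) * Real.exp (-a ^ 2 * η ^ 2 / 2) from sq _,
          ← Real.exp_add]
        congr 1
        ring]
      exact Real.sqrt_sq (Real.exp_pos _).le
    rw [← hexp3, ← hsqrt_fact _ (Real.exp_pos _).le, ← Real.sqrt_sq hJ0]
    exact Real.sqrt_le_sqrt hJub
end
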